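/- arXiv:1803.07239 — 4 statements merged into one kernel-verified Lean document; each statement's English description precedes it below -/
import Mathlib

section
/- Let H be a finite dimensional Hopf algebra, α, β, γ, δ Hopf automorphisms, and W = Σᵢ eᵢ ⊗ eⁱ. Then in H ⊗ (H* ⋈ H_(γ,δ)): (β⁻¹ ⊗ id)(W) · (γ ⊗ γ⁻¹βγ)Δ(h) = (β⁻¹δγ⁻¹βγ ⊗ γ⁻¹βγ)Δ^cop(h) · (β⁻¹ ⊗ id)(W) for all h ∈ H, where (β⁻¹ ⊗ id)(W) = Σᵢ β⁻¹(eᵢ) ⊗ (eⁱ ⋈ 1), (γ ⊗ γ⁻¹βγ)Δ(h) = Σ γ(h₁) ⊗ (ε ⋈ γ⁻¹βγ(h₂)), and (β⁻¹δγ⁻¹βγ ⊗ γ⁻¹βγ)Δ^cop(h) = Σ β⁻¹δγ⁻¹βγ(h₂) ⊗ (ε ⋈ γ⁻¹βγ(h₁)). -/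
open TensorProduct LinearMap

noncomputable section

namespace DCP

variable (K : Type) {H : Type} [Field K] [Ring H] [HopfAlgebra K H]

/-- A Hopf algebra automorphism: a linear equivalence that is an algebra morphism and a
coalgebra morphism. -/
def IsHopfAut (f : H ≃ₗ[K] H) : Prop :=
  (∀ x y : H, f (x * y) = f x * f y) ∧ f 1 = 1 ∧
    (Coalgebra.comul ∘ₗ f.toLinearMap
      = TensorProduct.map f.toLinearMap f.toLinearMap ∘ₗ Coalgebra.comul) ∧
    (Coalgebra.counit ∘ₗ f.toLinearMap = (Coalgebra.counit : H →ₗ[K] K))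

/-- The convolution product on the dual of `H`, as a bilinear map. -/
def convMul : Module.Dual K H →ₗ[K] Module.Dual K H →ₗ[K] Module.Dual K H :=
  (TensorProduct.mapBilinear (RingHom.id K) H H K K).compr₂
    ((LinearMap.lcomp K K (Coalgebra.comul (R := K) (A := H))) ∘ₗ
      (LinearMap.llcomp K (H ⊗[K] H) (K ⊗[K] K) K (TensorProduct.lid K K).toLinearMap))

@[simp] lemma convMul_apply (p q : Module.Dual K H) (x : H) :
    convMul K p q x = (TensorProduct.lid K K).toLinearMap
      (TensorProduct.map p q (Coalgebra.comul x)) := rfl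

/-- The coproduct on the dual of a finite-dimensional Hopf algebra, dual to multiplication. -/
def dcomul [FiniteDimensional K H] :
    Module.Dual K H →ₗ[K] Module.Dual K H ⊗[K] Module.Dual K H :=
  (TensorProduct.dualDistribEquiv K H H).symm.toLinearMap ∘ₗ (LinearMap.mul' K H).dualMap

/-- The iterated comultiplication `h ↦ h₁ ⊗ (h₂ ⊗ h₃)`. -/
def comul2 : H →ₗ[K] H ⊗[K] (H ⊗[K] H) :=
  (LinearMap.lTensor H (Coalgebra.comul (R := K))) ∘ₗ Coalgebra.comul

/-- Lift a trilinear map to the triple tensor product `H ⊗ (H ⊗ H)`. -/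
def lift3 {W : Type} [AddCommMonoid W] [Module K W]
    (Φ : H →ₗ[K] H →ₗ[K] H →ₗ[K] W) : H ⊗[K] (H ⊗[K] H) →ₗ[K] W :=
  TensorProduct.lift ((TensorProduct.lift.equiv (RingHom.id K) H H W).toLinearMap ∘ₗ Φ)

variable {K}

/-- auxiliary linear map `h₃ ↦ F (p ∘ mulLeft (u h₃) ∘ mulRight (v h₁)) ⊗ g h₂`. -/
def inner3 (u : H →ₗ[K] H) (F : Module.Dual K H →ₗ[K] Module.Dual K H)
    (p : Module.Dual K H) (a g2 : H) : H →ₗ[K] Module.Dual K H ⊗[K] H :=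
  ((TensorProduct.mk K (Module.Dual K H) H).flip g2) ∘ₗ F ∘ₗ
    (LinearMap.llcomp K H H K p) ∘ₗ
    ((LinearMap.llcomp K H H H).flip (LinearMap.mulRight K a)) ∘ₗ
    ((LinearMap.mul K H) ∘ₗ u)

@[simp] lemma inner3_apply (u : H →ₗ[K] H) (F : Module.Dual K H →ₗ[K] Module.Dual K H)
    (p : Module.Dual K H) (a g2 h₃ : H) :
    inner3 u F p a g2 h₃
      = F (p ∘ₗ LinearMap.mulLeft K (u h₃) ∘ₗ LinearMap.mulRight K a) ⊗ₜ[K] g2 := by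
  rfl

variable (K)

/-- The curried trilinear map
`(h₁, h₂, h₃) ↦ F (p ∘ mulLeft (u h₃) ∘ mulRight (v h₁)) ⊗ g h₂`. -/
def coreTri (u v : H →ₗ[K] H) (F : Module.Dual K H →ₗ[K] Module.Dual K H)
    (g : H →ₗ[K] H) (p : Module.Dual K H) :
    H →ₗ[K] H →ₗ[K] H →ₗ[K] Module.Dual K H ⊗[K] H :=
  LinearMap.mk₂ K (fun h₁ h₂ => inner3 u F p (v h₁) (g h₂))
    (fun m m' n => by
      have hR : ∀ a b : H, LinearMap.mulRight K (a + b)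
          = LinearMap.mulRight K a + LinearMap.mulRight K b := by
        intro a b; ext x; simp [mul_add]
      ext h₃
      simp [hR, LinearMap.comp_add, LinearMap.add_comp, map_add, add_tmul])
    (fun c m n => by
      have hR : ∀ a : H, LinearMap.mulRight K ((c : K) • a)
          = c • LinearMap.mulRight K a := by
        intro a; ext x; simp [mul_smul_comm]
      ext h₃
      simp [hR, LinearMap.comp_smul, LinearMap.smul_comp, map_smul, smul_tmul'])
    (fun m n n' => by
      ext h₃
      simp [map_add, tmul_add])
    (fun c m n => by
      ext h₃
      simp [map_smul, tmul_smul])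

/-- The diagonal crossed product of pure tensors:
`(p ⋈ h)(q ⋈ l) = Σ p (α(h₁) ▶ q ◀ S⁻¹β(h₃)) ⋈ h₂ l`. -/
def dprod (α β Sinv : H →ₗ[K] H) (p : Module.Dual K H) (h : H)
    (q : Module.Dual K H) (l : H) : Module.Dual K H ⊗[K] H :=
  lift3 K (coreTri K (Sinv ∘ₗ β) α (convMul K p) (LinearMap.mulRight K l) q) (comul2 K h)

/-- The value of the antipode of the diagonal crossed product on a pure tensor. -/
def smapVal (α β Sinv : H →ₗ[K] H) (p : Module.Dual K H) (h : H) :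
    Module.Dual K H ⊗[K] H :=
  lift3 K (coreTri K (Sinv ∘ₗ β ∘ₗ HopfAlgebra.antipode (R := K))
      (Sinv ∘ₗ α) Sinv.dualMap
      (α ∘ₗ β ∘ₗ HopfAlgebra.antipode (R := K)) p) (comul2 K h)

/-- Componentwise product on a tensor product of two (nonunital) algebras given by
bilinear multiplications. -/
def tmul₂ {A B : Type} [AddCommMonoid A] [Module K A] [AddCommMonoid B] [Module K B]
    (M1 : A →ₗ[K] A →ₗ[K] A) (M2 : B →ₗ[K] B →ₗ[K] B) :
    A ⊗[K] B →ₗ[K] A ⊗[K] B →ₗ[K] A ⊗[K] B :=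
  (TensorProduct.homTensorHomMap (RingHom.id K) A B A B) ∘ₗ (TensorProduct.map M1 M2)

/-- The comultiplication component `Δ_{(α,β),(γ,δ)}(p ⋈ h) = Σ (p₂ ⋈ c h₁) ⊗ (p₁ ⋈ e h₂)`
(with `c = γ`, `e = γ⁻¹βγ`). -/
def deltaComp [FiniteDimensional K H] (c e : H →ₗ[K] H) :
    Module.Dual K H ⊗[K] H →ₗ[K]
      (Module.Dual K H ⊗[K] H) ⊗[K] (Module.Dual K H ⊗[K] H) :=
  (TensorProduct.tensorTensorTensorComm K (Module.Dual K H) (Module.Dual K H) H H).toLinearMap ∘ₗ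
    TensorProduct.map
      ((TensorProduct.comm K (Module.Dual K H) (Module.Dual K H)).toLinearMap ∘ₗ dcomul K)
      (TensorProduct.map c e ∘ₗ Coalgebra.comul)

/-- The crossing map `ξ_(a,b)^(c,·)(p ⋈ h) = (p ∘ b a⁻¹) ⋈ a c⁻¹ b⁻¹ c (h)`. -/
def xiMap (a b c : H ≃ₗ[K] H) :
    Module.Dual K H ⊗[K] H →ₗ[K] Module.Dual K H ⊗[K] H :=
  TensorProduct.map ((b.toLinearMap ∘ₗ a.symm.toLinearMap).dualMap)
    (a.toLinearMap ∘ₗ c.symm.toLinearMap ∘ₗ b.symm.toLinearMap ∘ₗ c.toLinearMap)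

/-- Embedding of the dual into the crossed product, `p ↦ p ⋈ 1`. -/
def toD1 : Module.Dual K H →ₗ[K] Module.Dual K H ⊗[K] H :=
  (TensorProduct.mk K (Module.Dual K H) H).flip 1

/-- Embedding of `H` into the crossed product, `h ↦ ε ⋈ h`. -/
def toD2 : H →ₗ[K] Module.Dual K H ⊗[K] H :=
  TensorProduct.mk K (Module.Dual K H) H (Coalgebra.counit (R := K))

end DCP


namespace DCPAux

variable {K H : Type} [Field K] [Ring H] [HopfAlgebra K H]

open Coalgebra HopfAlgebra

def famRepr {ι' : Type*} (v : H) (s : Finset ι') (p q : ι' → H)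
    (hpq : ∑ k ∈ s, p k ⊗ₜ[K] q k = Coalgebra.comul v) : Coalgebra.Repr K v ι' :=
  ⟨s, p, q, hpq⟩

lemma fam_antipode_mul {ι' : Type*} (v : H) (s : Finset ι') (p q : ι' → H)
    (hpq : ∑ k ∈ s, p k ⊗ₜ[K] q k = Coalgebra.comul v) :
    ∑ k ∈ s, antipode (R := K) (p k) * q k = Coalgebra.counit (R := K) v • (1 : H) :=
  sum_antipode_mul_eq_smul (famRepr v s p q hpq)

lemma fam_mul_antipode {ι' : Type*} (v : H) (s : Finset ι') (p q : ι' → H)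
    (hpq : ∑ k ∈ s, p k ⊗ₜ[K] q k = Coalgebra.comul v) :
    ∑ k ∈ s, p k * antipode (R := K) (q k) = Coalgebra.counit (R := K) v • (1 : H) :=
  sum_mul_antipode_eq_smul (famRepr v s p q hpq)

lemma counit_smul_right (a : H) {κ : Type*} (r : Coalgebra.Repr K a κ) :
    ∑ i ∈ r.index, Coalgebra.counit (R := K) (r.left i) • r.right i = a := by
  have := congrArg (TensorProduct.lid K H) (Coalgebra.sum_counit_tmul_eq r)
  simp only [map_sum, lid_tmul] at this
  simpa using this

lemma counit_smul_left (a : H) {κ : Type*} (r : Coalgebra.Repr K a κ) :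
    ∑ i ∈ r.index, Coalgebra.counit (R := K) (r.right i) • r.left i = a := by
  have := congrArg (TensorProduct.rid K H) (Coalgebra.sum_tmul_counit_eq r)
  simp only [map_sum, rid_tmul] at this
  simpa using this

lemma antipode_one' : antipode (R := K) (1 : H) = 1 := by
  have := mul_antipode_rTensor_comul_apply (R := K) (1 : H)
  simpa [Algebra.TensorProduct.one_def] using this

/-- `∑ S(a₁) a₂ ⊗ a₃ = 1 ⊗ a`. -/
lemma sum_SA (a : H) (ra : Coalgebra.Repr K a (H × H))
    (ra1 : (i : H × H) → Coalgebra.Repr K (ra.left i) (H × H))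
    (ra2 : (i : H × H) → Coalgebra.Repr K (ra.right i) (H × H)) :
    ∑ i ∈ ra.index, ∑ k ∈ (ra2 i).index,
      (antipode (R := K) (ra.left i) * (ra2 i).left k) ⊗ₜ[K] (ra2 i).right k
      = (1 : H) ⊗ₜ[K] a := by
  have key := Coalgebra.sum_tmul_tmul_eq (R := K) ra ra1 ra2
  set Z : H ⊗[K] (H ⊗[K] H) →ₗ[K] H ⊗[K] H :=
    ((LinearMap.mul' K H ∘ₗ LinearMap.rTensor H (antipode (R := K))).rTensor H)
      ∘ₗ (TensorProduct.assoc K H H H).symm.toLinearMap with hZ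
  have hZapp : ∀ x y z : H, Z (x ⊗ₜ (y ⊗ₜ z)) = (antipode (R := K) x * y) ⊗ₜ z := by
    intro x y z; simp [hZ]
  have := congrArg Z key
  simp only [map_sum, hZapp] at this
  rw [← this]
  have h2 : ∀ i ∈ ra.index, ∑ k ∈ (ra1 i).index,
      (antipode (R := K) ((ra1 i).left k) * (ra1 i).right k) ⊗ₜ[K] ra.right i
      = (Coalgebra.counit (R := K) (ra.left i) • (1:H)) ⊗ₜ[K] ra.right i := by
    intro i _
    rw [← TensorProduct.sum_tmul, sum_antipode_mul_eq_smul (ra1 i)]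
  rw [Finset.sum_congr rfl h2]
  simp only [TensorProduct.smul_tmul, ← TensorProduct.tmul_sum]
  rw [counit_smul_right a ra]

/-- The antipode is anti-multiplicative. -/
lemma antipode_mul' (a c : H) :
    antipode (R := K) (a * c) = antipode (R := K) c * antipode (R := K) a := by
  classical
  set S : H →ₗ[K] H := antipode (R := K) with hS
  set ra := Coalgebra.Repr.arbitrary K a
  set rc := Coalgebra.Repr.arbitrary K c
  set ra1 : (i : H × H) → Coalgebra.Repr K (ra.left i) (H × H) :=
    fun i => Coalgebra.Repr.arbitrary K (ra.left i)
  set ra2 : (i : H × H) → Coalgebra.Repr K (ra.right i) (H × H) :=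
    fun i => Coalgebra.Repr.arbitrary K (ra.right i)
  set rc1 : (j : H × H) → Coalgebra.Repr K (rc.left j) (H × H) :=
    fun j => Coalgebra.Repr.arbitrary K (rc.left j)
  set rc2 : (j : H × H) → Coalgebra.Repr K (rc.right j) (H × H) :=
    fun j => Coalgebra.Repr.arbitrary K (rc.right j)
  -- the middle term
  set MID : H := ∑ j ∈ rc.index, ∑ i ∈ ra.index, ∑ k ∈ (ra2 i).index, ∑ l ∈ (rc2 j).index,
    S (rc.left j) * ((S (ra.left i) * (ra2 i).left k) * (rc2 j).left l
      * S ((ra2 i).right k * (rc2 j).right l)) with hMID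
  have way2 : MID = S (a * c) := by
    rw [hMID]
    -- collapse the a-legs
    have hstep : ∀ j ∈ rc.index, ∀ l ∈ (rc2 j).index,
        ∑ i ∈ ra.index, ∑ k ∈ (ra2 i).index,
          S (rc.left j) * ((S (ra.left i) * (ra2 i).left k) * (rc2 j).left l
            * S ((ra2 i).right k * (rc2 j).right l))
        = S (rc.left j) * ((rc2 j).left l * S (a * (rc2 j).right l)) := by
      intro j _ l _
      set Ξ : H ⊗[K] H →ₗ[K] H :=
        LinearMap.mulLeft K (S (rc.left j)) ∘ₗ LinearMap.mul' K H ∘ₗ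
          TensorProduct.map (LinearMap.mulRight K ((rc2 j).left l))
            (S ∘ₗ LinearMap.mulRight K ((rc2 j).right l)) with hXi
      have hXiapp : ∀ u w : H, Ξ (u ⊗ₜ w)
          = S (rc.left j) * (u * (rc2 j).left l * S (w * (rc2 j).right l)) := by
        intro u w; simp [hXi, mul_assoc]
      have := congrArg Ξ (sum_SA a ra ra1 ra2)
      simp only [map_sum, hXiapp] at this
      rw [this, one_mul]
    have reorder : ∀ j : H × H,
        (∑ i ∈ ra.index, ∑ k ∈ (ra2 i).index, ∑ l ∈ (rc2 j).index,
          S (rc.left j) * ((S (ra.left i) * (ra2 i).left k) * (rc2 j).left l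
            * S ((ra2 i).right k * (rc2 j).right l)))
        = ∑ l ∈ (rc2 j).index, ∑ i ∈ ra.index, ∑ k ∈ (ra2 i).index,
          S (rc.left j) * ((S (ra.left i) * (ra2 i).left k) * (rc2 j).left l
            * S ((ra2 i).right k * (rc2 j).right l)) := by
      intro j
      rw [Finset.sum_congr rfl (fun i _ => Finset.sum_comm)]
      exact Finset.sum_comm
    rw [Finset.sum_congr rfl (fun j _ => reorder j)]
    rw [Finset.sum_congr rfl (fun j hj => Finset.sum_congr rfl (fun l hl => hstep j hj l hl))]
    -- now collapse the c-legs
    set Th : H ⊗[K] H →ₗ[K] H :=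
      LinearMap.mul' K H ∘ₗ TensorProduct.map LinearMap.id (S ∘ₗ LinearMap.mulLeft K a)
      with hTh
    have hThapp : ∀ u w : H, Th (u ⊗ₜ w) = u * S (a * w) := by
      intro u w; simp [hTh]
    have := congrArg Th (sum_SA c rc rc1 rc2)
    simp only [map_sum, hThapp] at this
    rw [Finset.sum_congr rfl (fun j _ => Finset.sum_congr rfl
      (fun l _ => (mul_assoc (S (rc.left j)) ((rc2 j).left l) (S (a * (rc2 j).right l))).symm))]
    rw [this, one_mul]
  have way1 : MID = S c * S a := by
    rw [hMID]
    have hcol : ∀ j ∈ rc.index, ∀ i ∈ ra.index,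
        ∑ k ∈ (ra2 i).index, ∑ l ∈ (rc2 j).index,
          ((ra2 i).left k * (rc2 j).left l) * S ((ra2 i).right k * (rc2 j).right l)
        = (Coalgebra.counit (R := K) (ra.right i) * Coalgebra.counit (R := K) (rc.right j))
            • (1 : H) := by
      intro j _ i _
      have hpq : ∑ p ∈ (ra2 i).index ×ˢ (rc2 j).index,
          ((ra2 i).left p.1 * (rc2 j).left p.2) ⊗ₜ[K]
            ((ra2 i).right p.1 * (rc2 j).right p.2)
          = Coalgebra.comul (R := K) (ra.right i * rc.right j) := by
        rw [Finset.sum_product, Bialgebra.comul_mul, ← (ra2 i).eq, ← (rc2 j).eq,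
          Finset.sum_mul_sum]
        simp [Algebra.TensorProduct.tmul_mul_tmul]
      have h2 := fam_mul_antipode _ _ _ _ hpq
      rw [Finset.sum_product] at h2
      rw [h2, Bialgebra.counit_mul]
    have hterm : ∀ j ∈ rc.index, ∀ i ∈ ra.index,
        ∑ k ∈ (ra2 i).index, ∑ l ∈ (rc2 j).index,
          S (rc.left j) * ((S (ra.left i) * (ra2 i).left k) * (rc2 j).left l
            * S ((ra2 i).right k * (rc2 j).right l))
        = (Coalgebra.counit (R := K) (rc.right j) • S (rc.left j))
          * (Coalgebra.counit (R := K) (ra.right i) • S (ra.left i)) := by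
      intro j hj i hi
      have : ∀ k l, S (rc.left j) * ((S (ra.left i) * (ra2 i).left k) * (rc2 j).left l
            * S ((ra2 i).right k * (rc2 j).right l))
          = S (rc.left j) * (S (ra.left i) *
            (((ra2 i).left k * (rc2 j).left l) * S ((ra2 i).right k * (rc2 j).right l))) := by
        intro k l; simp only [mul_assoc]
      simp only [this]
      simp only [← Finset.mul_sum]
      rw [hcol j hj i hi]
      rw [mul_smul_comm, mul_smul_comm, mul_one]
      rw [mul_comm (Coalgebra.counit (R := K) (ra.right i)) _, mul_smul]
      rw [smul_mul_assoc, mul_smul_comm]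
    rw [Finset.sum_congr rfl (fun j hj => Finset.sum_congr rfl (fun i hi => hterm j hj i hi))]
    rw [← Finset.sum_mul_sum]
    have hSa : ∑ i ∈ ra.index, Coalgebra.counit (R := K) (ra.right i) • S (ra.left i)
        = S a := by
      simp only [← map_smul, ← map_sum]
      rw [counit_smul_left a ra]
    have hSc : ∑ j ∈ rc.index, Coalgebra.counit (R := K) (rc.right j) • S (rc.left j)
        = S c := by
      simp only [← map_smul, ← map_sum]
      rw [counit_smul_left c rc]
    rw [hSc, hSa]
  rw [← way2, way1]

section Sinv
variable (Sinv : H →ₗ[K] H)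
  (hS1 : Sinv ∘ₗ HopfAlgebra.antipode (R := K) (A := H) = LinearMap.id)
  (hS2 : HopfAlgebra.antipode (R := K) (A := H) ∘ₗ Sinv = LinearMap.id)

include hS1 in
lemma sinv_antipode (x : H) : Sinv (antipode (R := K) x) = x := by
  have := LinearMap.congr_fun hS1 x; simpa using this

include hS2 in
lemma antipode_sinv (x : H) : antipode (R := K) (Sinv x) = x := by
  have := LinearMap.congr_fun hS2 x; simpa using this

include hS1 in
lemma antipode_injective : Function.Injective (antipode (R := K) (A := H)) := by
  intro u v huv
  rw [← sinv_antipode Sinv hS1 u, huv, sinv_antipode Sinv hS1 v]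

include hS1 in
lemma sinv_one : Sinv (1 : H) = 1 := by
  have := sinv_antipode (K := K) Sinv hS1 (1 : H)
  rwa [antipode_one'] at this

include hS1 hS2 in
lemma sinv_mul (x y : H) : Sinv (x * y) = Sinv y * Sinv x := by
  apply antipode_injective Sinv hS1
  rw [antipode_sinv Sinv hS2, antipode_mul', antipode_sinv Sinv hS2,
    antipode_sinv Sinv hS2]

include hS1 hS2 in
lemma fam_sinv {ι' : Type*} (v : H) (s : Finset ι') (p q : ι' → H)
    (hpq : ∑ k ∈ s, p k ⊗ₜ[K] q k = Coalgebra.comul v) :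
    ∑ k ∈ s, q k * Sinv (p k) = Coalgebra.counit (R := K) v • (1 : H) := by
  have h1 := fam_mul_antipode v s p q hpq
  have h2 := congrArg Sinv h1
  rw [map_sum, map_smul, sinv_one Sinv hS1] at h2
  rw [← h2]
  refine Finset.sum_congr rfl fun k _ => ?_
  rw [sinv_mul Sinv hS1 hS2, sinv_antipode Sinv hS1]

end Sinv

section Aut
variable (f : H ≃ₗ[K] H) (hf : DCP.IsHopfAut K f)

include hf in
lemma aut_symm_mul (x y : H) : f.symm (x * y) = f.symm x * f.symm y := by
  apply f.injective
  rw [hf.1, f.apply_symm_apply, f.apply_symm_apply, f.apply_symm_apply]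

include hf in
lemma aut_comul (x : H) :
    Coalgebra.comul (R := K) (f x)
      = TensorProduct.map f.toLinearMap f.toLinearMap (Coalgebra.comul x) := by
  have := LinearMap.congr_fun hf.2.2.1 x; simpa using this

include hf in
lemma aut_symm_comul (x : H) :
    Coalgebra.comul (R := K) (f.symm x)
      = TensorProduct.map f.symm.toLinearMap f.symm.toLinearMap (Coalgebra.comul x) := by
  have h1 := aut_comul f hf (f.symm x)
  rw [f.apply_symm_apply] at h1
  have hcc : TensorProduct.map f.symm.toLinearMap f.symm.toLinearMap ∘ₗ
      TensorProduct.map f.toLinearMap f.toLinearMap = LinearMap.id := by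
    apply TensorProduct.ext'; intro u v; simp
  have h3 := LinearMap.congr_fun hcc (Coalgebra.comul (R := K) (f.symm x))
  simp only [LinearMap.comp_apply, LinearMap.id_apply] at h3
  rw [h1]
  exact h3.symm

include hf in
lemma aut_counit (x : H) :
    Coalgebra.counit (R := K) (f x) = Coalgebra.counit (R := K) x := by
  have := LinearMap.congr_fun hf.2.2.2 x; simpa using this

include hf in
lemma aut_symm_counit (x : H) :
    Coalgebra.counit (R := K) (f.symm x) = Coalgebra.counit (R := K) x := by
  have := aut_counit f hf (f.symm x)
  rw [f.apply_symm_apply] at this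
  exact this.symm

end Aut

section Dual

lemma dual_swap {ι : Type} [Fintype ι] [DecidableEq ι] (b : Module.Basis ι K H)
    (T g : H →ₗ[K] H) :
    ∑ i, T (b i) ⊗ₜ[K] ((b.coord i ∘ₗ g : Module.Dual K H))
      = ∑ i, T (g (b i)) ⊗ₜ[K] (b.coord i : Module.Dual K H) := by
  have hL : ∀ i : ι, (b.coord i ∘ₗ g : Module.Dual K H)
      = ∑ j, (b.coord i) (g (b j)) • b.coord j := by
    intro i
    exact (Module.Basis.sum_dual_apply_smul_coord b (b.coord i ∘ₗ g)).symm
  have hR : ∀ i : ι, g (b i) = ∑ j, (b.coord j) (g (b i)) • b j := by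
    intro i
    simp only [Module.Basis.coord_apply]
    exact (b.sum_repr (g (b i))).symm
  calc ∑ i, T (b i) ⊗ₜ[K] ((b.coord i ∘ₗ g : Module.Dual K H))
      = ∑ i, ∑ j, (b.coord i) (g (b j)) • (T (b i) ⊗ₜ[K] (b.coord j : Module.Dual K H)) := by
        refine Finset.sum_congr rfl fun i _ => ?_
        rw [hL i, TensorProduct.tmul_sum]
        simp [TensorProduct.tmul_smul]
    _ = ∑ j, ∑ i, (b.coord i) (g (b j)) • (T (b i) ⊗ₜ[K] (b.coord j : Module.Dual K H)) :=
        Finset.sum_comm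
    _ = ∑ i, T (g (b i)) ⊗ₜ[K] (b.coord i : Module.Dual K H) := by
        refine Finset.sum_congr rfl fun j _ => ?_
        conv_rhs => rw [hR j]
        rw [map_sum, TensorProduct.sum_tmul]
        refine Finset.sum_congr rfl fun i _ => ?_
        rw [map_smul, TensorProduct.smul_tmul']

end Dual



section Eval

lemma convMul_counit_right (p : Module.Dual K H) :
    DCP.convMul K p (Coalgebra.counit (R := K)) = p := by
  ext x
  rw [DCP.convMul_apply]
  rw [← (Coalgebra.Repr.arbitrary K x).eq]
  simp only [map_sum, TensorProduct.map_tmul, LinearEquiv.coe_coe, lid_tmul, smul_eq_mul]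
  calc ∑ i ∈ (Coalgebra.Repr.arbitrary K x).index,
        p ((Coalgebra.Repr.arbitrary K x).left i) *
          Coalgebra.counit (R := K) ((Coalgebra.Repr.arbitrary K x).right i)
      = p (∑ i ∈ (Coalgebra.Repr.arbitrary K x).index,
          Coalgebra.counit (R := K) ((Coalgebra.Repr.arbitrary K x).right i) •
            (Coalgebra.Repr.arbitrary K x).left i) := by
        rw [map_sum]
        refine Finset.sum_congr rfl fun i _ => ?_
        rw [map_smul, smul_eq_mul, mul_comm]
    _ = p x := by rw [counit_smul_left x (Coalgebra.Repr.arbitrary K x)]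

lemma convMul_counit_left (p : Module.Dual K H) :
    DCP.convMul K (Coalgebra.counit (R := K)) p = p := by
  ext x
  rw [DCP.convMul_apply]
  rw [← (Coalgebra.Repr.arbitrary K x).eq]
  simp only [map_sum, TensorProduct.map_tmul, LinearEquiv.coe_coe, lid_tmul, smul_eq_mul]
  calc ∑ i ∈ (Coalgebra.Repr.arbitrary K x).index,
        Coalgebra.counit (R := K) ((Coalgebra.Repr.arbitrary K x).left i) *
          p ((Coalgebra.Repr.arbitrary K x).right i)
      = p (∑ i ∈ (Coalgebra.Repr.arbitrary K x).index,
          Coalgebra.counit (R := K) ((Coalgebra.Repr.arbitrary K x).left i) •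
            (Coalgebra.Repr.arbitrary K x).right i) := by
        rw [map_sum]
        refine Finset.sum_congr rfl fun i _ => ?_
        rw [map_smul, smul_eq_mul]
    _ = p x := by rw [counit_smul_right x (Coalgebra.Repr.arbitrary K x)]

lemma tmul2_tmul {A B : Type} [AddCommMonoid A] [Module K A] [AddCommMonoid B] [Module K B]
    (M1 : A →ₗ[K] A →ₗ[K] A) (M2 : B →ₗ[K] B →ₗ[K] B) (a c : A) (bb d : B) :
    DCP.tmul₂ K M1 M2 (a ⊗ₜ[K] bb) (c ⊗ₜ[K] d) = M1 a c ⊗ₜ[K] M2 bb d := by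
  simp [DCP.tmul₂, TensorProduct.homTensorHomMap_apply]

lemma lift3_tmul {W : Type} [AddCommMonoid W] [Module K W]
    (Φ : H →ₗ[K] H →ₗ[K] H →ₗ[K] W) (x y z : H) :
    DCP.lift3 K Φ (x ⊗ₜ[K] (y ⊗ₜ[K] z)) = Φ x y z := by
  simp [DCP.lift3]

end Eval

end DCPAux


set_option maxHeartbeats 2000000 in
/-- In `H ⊗ (H* ⋈ H_(γ,δ))`:
`(β⁻¹ ⊗ id)(W) (γ ⊗ γ⁻¹βγ)Δ(h) = (β⁻¹δγ⁻¹βγ ⊗ γ⁻¹βγ)Δ^cop(h) (β⁻¹ ⊗ id)(W)`. -/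
theorem stmt13 (K H : Type) [Field K] [Ring H] [HopfAlgebra K H] [FiniteDimensional K H]
    (Sinv : H →ₗ[K] H)
    (hS1 : Sinv ∘ₗ HopfAlgebra.antipode (R := K) (A := H) = LinearMap.id)
    (hS2 : HopfAlgebra.antipode (R := K) (A := H) ∘ₗ Sinv = LinearMap.id)
    (α β γ δ : H ≃ₗ[K] H)
    (hα : DCP.IsHopfAut K α)
    (hβ : DCP.IsHopfAut K β)
    (hγ : DCP.IsHopfAut K γ)
    (hδ : DCP.IsHopfAut K δ)
    (M : Module.Dual K H ⊗[K] H →ₗ[K] Module.Dual K H ⊗[K] H →ₗ[K] Module.Dual K H ⊗[K] H)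
    (hM : ∀ (p : Module.Dual K H) (h : H) (q : Module.Dual K H) (l : H),
      M (p ⊗ₜ[K] h) (q ⊗ₜ[K] l) = DCP.dprod K (γ.toLinearMap) (δ.toLinearMap) Sinv p h q l)
    (ι : Type) [Fintype ι] [DecidableEq ι] (b : Module.Basis ι K H) :
    ∀ h : H,
      DCP.tmul₂ K (LinearMap.mul K H) M
        (∑ i, β.symm (b i) ⊗ₜ[K] (b.coord i ⊗ₜ[K] (1 : H)))
        (TensorProduct.map γ.toLinearMap
          (DCP.toD2 K ∘ₗ γ.symm.toLinearMap ∘ₗ β.toLinearMap ∘ₗ γ.toLinearMap)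
          (Coalgebra.comul h))
      = DCP.tmul₂ K (LinearMap.mul K H) M
          (TensorProduct.map
            (β.symm.toLinearMap ∘ₗ δ.toLinearMap ∘ₗ γ.symm.toLinearMap ∘ₗ β.toLinearMap ∘ₗ
              γ.toLinearMap)
            (DCP.toD2 K ∘ₗ γ.symm.toLinearMap ∘ₗ β.toLinearMap ∘ₗ γ.toLinearMap)
            ((TensorProduct.comm K H H) (Coalgebra.comul h)))
          (∑ i, β.symm (b i) ⊗ₜ[K] (b.coord i ⊗ₜ[K] (1 : H)))     := by
  classical
  intro h
  have hβsm : ∀ x y : H, β.symm (x * y) = β.symm x * β.symm y :=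
    DCPAux.aut_symm_mul β hβ
  -- comultiplication of the composite automorphism e = γ⁻¹βγ
  have hcomul3 : ∀ (z : H) (r : Coalgebra.Repr K z (H × H)),
      Coalgebra.comul (R := K) (γ.symm (β (γ z)))
        = ∑ m ∈ r.index, (γ.symm (β (γ (r.left m)))) ⊗ₜ[K] (γ.symm (β (γ (r.right m)))) := by
    intro z r
    rw [DCPAux.aut_symm_comul γ hγ, DCPAux.aut_comul β hβ, DCPAux.aut_comul γ hγ, ← r.eq]
    simp [map_sum]
  -- value of M on (q ⋈ 1)(ε ⋈ l)
  have hMone : ∀ (q : Module.Dual K H) (l : H),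
      M (q ⊗ₜ[K] (1 : H)) ((Coalgebra.counit : Module.Dual K H) ⊗ₜ[K] l) = q ⊗ₜ[K] l := by
    intro q l
    rw [hM]
    simp only [DCP.dprod]
    have hc2 : DCP.comul2 K (1 : H) = (1 : H) ⊗ₜ[K] ((1 : H) ⊗ₜ[K] (1 : H)) := by
      simp [DCP.comul2, Algebra.TensorProduct.one_def]
    rw [hc2, DCPAux.lift3_tmul]
    simp only [DCP.coreTri, LinearMap.mk₂_apply, DCP.inner3_apply]
    simp only [LinearMap.comp_apply, LinearEquiv.coe_coe]
    rw [hδ.2.1, DCPAux.sinv_one Sinv hS1, hγ.2.1]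
    simp only [LinearMap.mulLeft_one, LinearMap.mulRight_one, LinearMap.comp_id,
      LinearMap.id_comp]
    rw [DCPAux.convMul_counit_right]
    simp [LinearMap.mulRight_apply]
  -- value of M on (ε ⋈ e z)(q ⋈ 1)
  have hMtwo : ∀ (q : Module.Dual K H) (z : H) (rz : Coalgebra.Repr K z (H × H))
      (rzz : (m : H × H) → Coalgebra.Repr K (rz.right m) (H × H)),
      M ((Coalgebra.counit : Module.Dual K H) ⊗ₜ[K] (γ.symm (β (γ z)))) (q ⊗ₜ[K] (1 : H))
      = ∑ m ∈ rz.index, ∑ n ∈ (rzz m).index,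
          ((q ∘ₗ LinearMap.mulLeft K (Sinv (δ (γ.symm (β (γ ((rzz m).right n)))))) ∘ₗ
            LinearMap.mulRight K (β (γ (rz.left m)))) : Module.Dual K H) ⊗ₜ[K]
            (γ.symm (β (γ ((rzz m).left n)))) := by
    intro q z rz rzz
    rw [hM]
    simp only [DCP.dprod]
    have hc2 : DCP.comul2 K (γ.symm (β (γ z))) = ∑ m ∈ rz.index, ∑ n ∈ (rzz m).index,
        (γ.symm (β (γ (rz.left m)))) ⊗ₜ[K]
          ((γ.symm (β (γ ((rzz m).left n)))) ⊗ₜ[K] (γ.symm (β (γ ((rzz m).right n))))) := by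
      simp only [DCP.comul2, LinearMap.comp_apply]
      rw [hcomul3 z rz, map_sum]
      simp only [LinearMap.lTensor_tmul]
      refine Finset.sum_congr rfl fun m _ => ?_
      rw [hcomul3 (rz.right m) (rzz m), TensorProduct.tmul_sum]
    rw [hc2, map_sum]
    refine Finset.sum_congr rfl fun m _ => ?_
    rw [map_sum]
    refine Finset.sum_congr rfl fun n _ => ?_
    rw [DCPAux.lift3_tmul]
    simp only [DCP.coreTri, LinearMap.mk₂_apply, DCP.inner3_apply]
    simp only [LinearMap.comp_apply, LinearEquiv.coe_coe, LinearEquiv.apply_symm_apply]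
    rw [DCPAux.convMul_counit_left]
    simp [LinearMap.mulRight_apply]
  -- the representation of `comul h` and derived representations
  set rh := Coalgebra.Repr.arbitrary K h with hrhdef
  trans (∑ j ∈ rh.index, ∑ i : ι,
    (β.symm (b i) * γ (rh.left j)) ⊗ₜ[K]
      ((b.coord i : Module.Dual K H) ⊗ₜ[K] (γ.symm (β (γ (rh.right j))))))
  · -- LHS = V
    rw [← rh.eq]
    simp only [map_sum, LinearMap.sum_apply, TensorProduct.map_tmul, LinearMap.comp_apply,
      LinearEquiv.coe_coe, DCP.toD2, TensorProduct.mk_apply, DCPAux.tmul2_tmul,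
      LinearMap.mul_apply', hMone]
  · -- V = RHS
    symm
    rw [← rh.eq]
    -- derived representations
    set rx : (j : H × H) → Coalgebra.Repr K (rh.left j) (H × H) :=
      fun j => Coalgebra.Repr.arbitrary K (rh.left j) with hrx
    set ry : (j : H × H) → Coalgebra.Repr K (rh.right j) (H × H) :=
      fun j => Coalgebra.Repr.arbitrary K (rh.right j) with hry
    set rxx : (j : H × H) → (m : H × H) → Coalgebra.Repr K ((rx j).right m) (H × H) :=
      fun j m => Coalgebra.Repr.arbitrary K ((rx j).right m) with hrxx
    set ryy : (j : H × H) → (m : H × H) → Coalgebra.Repr K ((ry j).right m) (H × H) :=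
      fun j m => Coalgebra.Repr.arbitrary K ((ry j).right m) with hryy
    -- comultiplication of δ∘e
    have hcomulde : ∀ (z : H) (r : Coalgebra.Repr K z (H × H)),
        Coalgebra.comul (R := K) (δ (γ.symm (β (γ z))))
          = ∑ m ∈ r.index, (δ (γ.symm (β (γ (r.left m))))) ⊗ₜ[K]
              (δ (γ.symm (β (γ (r.right m)))))  := by
      intro z r
      rw [DCPAux.aut_comul δ hδ, hcomul3 z r, map_sum]
      simp
    have hcntde : ∀ z : H, Coalgebra.counit (R := K) (δ (γ.symm (β (γ z))))
        = Coalgebra.counit (R := K) z := by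
      intro z
      rw [DCPAux.aut_counit δ hδ, DCPAux.aut_symm_counit γ hγ, DCPAux.aut_counit β hβ,
        DCPAux.aut_counit γ hγ]
    -- the bundled 4-linear map G
    set φG : H ⊗[K] H →ₗ[K] H ⊗[K] Module.Dual K H :=
      ∑ i : ι, ((TensorProduct.mk K H (Module.Dual K H)).flip (b.coord i)) ∘ₗ
        β.symm.toLinearMap ∘ₗ LinearMap.mul' K H ∘ₗ
        LinearMap.rTensor H (LinearMap.mulRight K (b i)) with hphiG
    set G : H ⊗[K] (H ⊗[K] (H ⊗[K] H)) →ₗ[K] H ⊗[K] (Module.Dual K H ⊗[K] H) :=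
      ((TensorProduct.assoc K H (Module.Dual K H) H).toLinearMap ∘ₗ
       (TensorProduct.comm K H (H ⊗[K] Module.Dual K H)).toLinearMap ∘ₗ
       LinearMap.lTensor H φG ∘ₗ
       (TensorProduct.assoc K H H H).toLinearMap ∘ₗ
       (TensorProduct.comm K H (H ⊗[K] H)).toLinearMap ∘ₗ
       LinearMap.lTensor H (LinearMap.lTensor H
         (LinearMap.mul' K H ∘ₗ (TensorProduct.comm K H H).toLinearMap))) ∘ₗ
      TensorProduct.map (β.toLinearMap ∘ₗ γ.toLinearMap)
        (TensorProduct.map (γ.symm.toLinearMap ∘ₗ β.toLinearMap ∘ₗ γ.toLinearMap)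
          (TensorProduct.map
            (Sinv ∘ₗ δ.toLinearMap ∘ₗ γ.symm.toLinearMap ∘ₗ β.toLinearMap ∘ₗ γ.toLinearMap)
            (δ.toLinearMap ∘ₗ γ.symm.toLinearMap ∘ₗ β.toLinearMap ∘ₗ γ.toLinearMap)))
      with hGdef
    have hG : ∀ g1 g2 g3 g4 : H, G (g1 ⊗ₜ[K] (g2 ⊗ₜ[K] (g3 ⊗ₜ[K] g4)))
        = ∑ i : ι, β.symm (δ (γ.symm (β (γ g4))) * Sinv (δ (γ.symm (β (γ g3)))) * b i
            * β (γ g1)) ⊗ₜ[K]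
            ((b.coord i : Module.Dual K H) ⊗ₜ[K] γ.symm (β (γ g2))) := by
      intro g1 g2 g3 g4
      simp only [hGdef, hphiG, LinearMap.comp_apply, TensorProduct.map_tmul,
        LinearEquiv.coe_coe, LinearMap.lTensor_tmul, TensorProduct.comm_tmul,
        LinearMap.mul'_apply, TensorProduct.assoc_tmul, LinearMap.sum_apply,
        TensorProduct.tmul_sum, map_sum, LinearMap.rTensor_tmul, LinearMap.mulRight_apply,
        TensorProduct.mk_apply, LinearMap.flip_apply]
    -- the dual-basis swap
    have hswap : ∀ C aa rr mleg : H,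
        ∑ i : ι, (C * β.symm (b i)) ⊗ₜ[K]
            (((b.coord i ∘ₗ LinearMap.mulLeft K aa ∘ₗ LinearMap.mulRight K rr) :
              Module.Dual K H) ⊗ₜ[K] mleg)
          = ∑ i : ι, (C * β.symm (aa * (b i * rr))) ⊗ₜ[K]
              ((b.coord i : Module.Dual K H) ⊗ₜ[K] mleg) := by
      intro C aa rr mleg
      have base := DCPAux.dual_swap b β.symm.toLinearMap
        (LinearMap.mulLeft K aa ∘ₗ LinearMap.mulRight K rr)
      have h2 := congrArg (TensorProduct.map (LinearMap.mulLeft K C)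
        ((TensorProduct.mk K (Module.Dual K H) H).flip mleg)) base
      simp only [map_sum, TensorProduct.map_tmul, LinearMap.mulLeft_apply,
        LinearMap.flip_apply, TensorProduct.mk_apply, LinearEquiv.coe_coe,
        LinearMap.comp_apply, LinearMap.mulRight_apply] at h2
      exact h2
    -- Step 1 : expand the product and the inner comultiplications
    trans (∑ j ∈ rh.index, ∑ i : ι, ∑ m ∈ (rx j).index, ∑ n ∈ (rxx j m).index,
      (β.symm (δ (γ.symm (β (γ (rh.right j))))) * β.symm (b i)) ⊗ₜ[K]
        (((b.coord i ∘ₗ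
            LinearMap.mulLeft K (Sinv (δ (γ.symm (β (γ ((rxx j m).right n)))))) ∘ₗ
            LinearMap.mulRight K (β (γ ((rx j).left m)))) : Module.Dual K H) ⊗ₜ[K]
          (γ.symm (β (γ ((rxx j m).left n))))))
    · simp only [map_sum, LinearMap.sum_apply, TensorProduct.comm_tmul,
        TensorProduct.map_tmul, LinearMap.comp_apply, LinearEquiv.coe_coe, DCP.toD2,
        TensorProduct.mk_apply, DCPAux.tmul2_tmul, LinearMap.mul_apply']
      rw [Finset.sum_comm]
      refine Finset.sum_congr rfl fun j _ => Finset.sum_congr rfl fun i _ => ?_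
      rw [hMtwo (b.coord i) (rh.left j) (rx j) (rxx j), TensorProduct.tmul_sum]
      refine Finset.sum_congr rfl fun m _ => ?_
      rw [TensorProduct.tmul_sum]
    -- Step 2 : reorder the sums
    trans (∑ j ∈ rh.index, ∑ m ∈ (rx j).index, ∑ n ∈ (rxx j m).index, ∑ i : ι,
      (β.symm (δ (γ.symm (β (γ (rh.right j))))) * β.symm (b i)) ⊗ₜ[K]
        (((b.coord i ∘ₗ
            LinearMap.mulLeft K (Sinv (δ (γ.symm (β (γ ((rxx j m).right n)))))) ∘ₗ
            LinearMap.mulRight K (β (γ ((rx j).left m)))) : Module.Dual K H) ⊗ₜ[K]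
          (γ.symm (β (γ ((rxx j m).left n))))))
    · refine Finset.sum_congr rfl fun j _ => ?_
      rw [Finset.sum_comm]
      exact Finset.sum_congr rfl fun m _ => Finset.sum_comm
    -- Step 3 : dual-basis swap
    trans (∑ j ∈ rh.index, ∑ m ∈ (rx j).index, ∑ n ∈ (rxx j m).index, ∑ i : ι,
      (β.symm (δ (γ.symm (β (γ (rh.right j))))) *
        β.symm ((Sinv (δ (γ.symm (β (γ ((rxx j m).right n)))))) *
          (b i * β (γ ((rx j).left m))))) ⊗ₜ[K]
        ((b.coord i : Module.Dual K H) ⊗ₜ[K] (γ.symm (β (γ ((rxx j m).left n))))))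
    · refine Finset.sum_congr rfl fun j _ => Finset.sum_congr rfl fun m _ =>
        Finset.sum_congr rfl fun n _ => ?_
      exact hswap _ _ _ _
    -- Step 4 : recognize G applied to pure tensors
    trans (∑ j ∈ rh.index, ∑ m ∈ (rx j).index, ∑ n ∈ (rxx j m).index,
      G ((rx j).left m ⊗ₜ[K] ((rxx j m).left n ⊗ₜ[K]
        ((rxx j m).right n ⊗ₜ[K] rh.right j))))
    · refine Finset.sum_congr rfl fun j _ => Finset.sum_congr rfl fun m _ =>
        Finset.sum_congr rfl fun n _ => ?_
      rw [hG]
      refine Finset.sum_congr rfl fun i _ => ?_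
      simp only [hβsm, mul_assoc]
    -- Step 5 : coassociativity rearrangement
    trans (∑ j ∈ rh.index, ∑ m ∈ (ry j).index, ∑ n ∈ (ryy j m).index,
      G (rh.left j ⊗ₜ[K] ((ry j).left m ⊗ₜ[K]
        ((ryy j m).left n ⊗ₜ[K] (ryy j m).right n))))
    · have claimA := Coalgebra.sum_tmul_tmul_eq (R := K) rh rx ry
      set φm : H ⊗[K] H →ₗ[K] H ⊗[K] (H ⊗[K] H) :=
        (TensorProduct.assoc K H H H).toLinearMap ∘ₗ
          LinearMap.rTensor H (Coalgebra.comul (R := K)) with hphim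
      have h1 := congrArg (LinearMap.lTensor H φm) claimA
      simp only [map_sum, LinearMap.lTensor_tmul] at h1
      have hLside : ∀ (j : H × H) (m : H × H),
          (rx j).left m ⊗ₜ[K] φm ((rx j).right m ⊗ₜ[K] rh.right j)
            = ∑ n ∈ (rxx j m).index, (rx j).left m ⊗ₜ[K]
                ((rxx j m).left n ⊗ₜ[K] ((rxx j m).right n ⊗ₜ[K] rh.right j)) := by
        intro j m
        rw [hphim]
        simp only [LinearMap.comp_apply, LinearMap.rTensor_tmul, LinearEquiv.coe_coe]
        rw [← (rxx j m).eq, TensorProduct.sum_tmul, map_sum]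
        simp only [TensorProduct.assoc_tmul]
        rw [TensorProduct.tmul_sum]
      have hRside : ∀ j : H × H,
          ∑ m ∈ (ry j).index, rh.left j ⊗ₜ[K] φm ((ry j).left m ⊗ₜ[K] (ry j).right m)
            = ∑ m ∈ (ry j).index, ∑ n ∈ (ryy j m).index, rh.left j ⊗ₜ[K]
                ((ry j).left m ⊗ₜ[K] ((ryy j m).left n ⊗ₜ[K] (ryy j m).right n)) := by
        intro j
        rw [← TensorProduct.tmul_sum, ← map_sum, (ry j).eq, hphim]
        simp only [LinearMap.comp_apply, LinearEquiv.coe_coe]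
        rw [Coalgebra.coassoc_apply, ← (ry j).eq, map_sum]
        simp only [LinearMap.lTensor_tmul]
        rw [TensorProduct.tmul_sum]
        refine Finset.sum_congr rfl fun m _ => ?_
        rw [← (ryy j m).eq, TensorProduct.tmul_sum, TensorProduct.tmul_sum]
      have h2 : (∑ j ∈ rh.index, ∑ m ∈ (rx j).index, ∑ n ∈ (rxx j m).index,
            (rx j).left m ⊗ₜ[K] ((rxx j m).left n ⊗ₜ[K]
              ((rxx j m).right n ⊗ₜ[K] rh.right j)))
          = ∑ j ∈ rh.index, ∑ m ∈ (ry j).index, ∑ n ∈ (ryy j m).index,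
              rh.left j ⊗ₜ[K] ((ry j).left m ⊗ₜ[K]
                ((ryy j m).left n ⊗ₜ[K] (ryy j m).right n)) := by
        calc (∑ j ∈ rh.index, ∑ m ∈ (rx j).index, ∑ n ∈ (rxx j m).index,
              (rx j).left m ⊗ₜ[K] ((rxx j m).left n ⊗ₜ[K]
                ((rxx j m).right n ⊗ₜ[K] rh.right j)))
            = ∑ j ∈ rh.index, ∑ m ∈ (rx j).index,
                (rx j).left m ⊗ₜ[K] φm ((rx j).right m ⊗ₜ[K] rh.right j) := by
              exact Finset.sum_congr rfl fun j _ => Finset.sum_congr rfl fun m _ =>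
                (hLside j m).symm
          _ = ∑ j ∈ rh.index, ∑ m ∈ (ry j).index,
                rh.left j ⊗ₜ[K] φm ((ry j).left m ⊗ₜ[K] (ry j).right m) := h1
          _ = _ := Finset.sum_congr rfl fun j _ => hRside j
      have e1 := congrArg G h2
      simp only [map_sum] at e1
      exact e1
    -- Step 6 : evaluate G on the new legs
    trans (∑ j ∈ rh.index, ∑ m ∈ (ry j).index, ∑ n ∈ (ryy j m).index, ∑ i : ι,
      β.symm (δ (γ.symm (β (γ ((ryy j m).right n)))) *
          Sinv (δ (γ.symm (β (γ ((ryy j m).left n))))) * b i * β (γ (rh.left j))) ⊗ₜ[K]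
        ((b.coord i : Module.Dual K H) ⊗ₜ[K] γ.symm (β (γ ((ry j).left m)))))
    · exact Finset.sum_congr rfl fun j _ => Finset.sum_congr rfl fun m _ =>
        Finset.sum_congr rfl fun n _ => hG _ _ _ _
    -- Step 7 : collapse the antipode pair
    trans (∑ j ∈ rh.index, ∑ m ∈ (ry j).index, ∑ i : ι,
      Coalgebra.counit (R := K) ((ry j).right m) •
        (β.symm (b i * β (γ (rh.left j))) ⊗ₜ[K]
          ((b.coord i : Module.Dual K H) ⊗ₜ[K] γ.symm (β (γ ((ry j).left m))))))
    · refine Finset.sum_congr rfl fun j _ => Finset.sum_congr rfl fun m _ => ?_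
      rw [Finset.sum_comm]
      refine Finset.sum_congr rfl fun i _ => ?_
      set Lmap : H →ₗ[K] H ⊗[K] (Module.Dual K H ⊗[K] H) :=
        ((TensorProduct.mk K H (Module.Dual K H ⊗[K] H)).flip
            ((b.coord i : Module.Dual K H) ⊗ₜ[K] γ.symm (β (γ ((ry j).left m))))) ∘ₗ
          β.symm.toLinearMap ∘ₗ LinearMap.mulRight K (β (γ (rh.left j))) ∘ₗ
          LinearMap.mulRight K (b i) with hLm
      have hLmap : ∀ u : H, Lmap u
          = β.symm (u * b i * β (γ (rh.left j))) ⊗ₜ[K]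
              ((b.coord i : Module.Dual K H) ⊗ₜ[K] γ.symm (β (γ ((ry j).left m)))) := by
        intro u
        simp [hLm, LinearMap.mulRight_apply, mul_assoc]
      have hpq := (hcomulde ((ry j).right m) (ryy j m)).symm
      have hP := DCPAux.fam_sinv Sinv hS1 hS2 _ _ _ _ hpq
      calc ∑ n ∈ (ryy j m).index,
            β.symm (δ (γ.symm (β (γ ((ryy j m).right n)))) *
                Sinv (δ (γ.symm (β (γ ((ryy j m).left n))))) * b i * β (γ (rh.left j))) ⊗ₜ[K]
              ((b.coord i : Module.Dual K H) ⊗ₜ[K] γ.symm (β (γ ((ry j).left m))))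
          = ∑ n ∈ (ryy j m).index, Lmap (δ (γ.symm (β (γ ((ryy j m).right n)))) *
              Sinv (δ (γ.symm (β (γ ((ryy j m).left n)))))) := by
            exact Finset.sum_congr rfl fun n _ => (hLmap _).symm
        _ = Lmap (∑ n ∈ (ryy j m).index, δ (γ.symm (β (γ ((ryy j m).right n)))) *
              Sinv (δ (γ.symm (β (γ ((ryy j m).left n)))))) := (map_sum _ _ _).symm
        _ = Lmap (Coalgebra.counit (R := K) (δ (γ.symm (β (γ ((ry j).right m))))) • 1) := by
            rw [hP]
        _ = Coalgebra.counit (R := K) ((ry j).right m) •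
              (β.symm (b i * β (γ (rh.left j))) ⊗ₜ[K]
                ((b.coord i : Module.Dual K H) ⊗ₜ[K] γ.symm (β (γ ((ry j).left m))))) := by
            rw [map_smul, hcntde, hLmap, one_mul]
    -- Step 8 : collapse the counit
    trans (∑ j ∈ rh.index, ∑ i : ι,
      β.symm (b i * β (γ (rh.left j))) ⊗ₜ[K]
        ((b.coord i : Module.Dual K H) ⊗ₜ[K] γ.symm (β (γ (rh.right j)))))
    · refine Finset.sum_congr rfl fun j _ => ?_
      rw [Finset.sum_comm]
      refine Finset.sum_congr rfl fun i _ => ?_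
      set L2 : H →ₗ[K] H ⊗[K] (Module.Dual K H ⊗[K] H) :=
        (TensorProduct.mk K H (Module.Dual K H ⊗[K] H)
            (β.symm (b i * β (γ (rh.left j))))) ∘ₗ
          (TensorProduct.mk K (Module.Dual K H) H (b.coord i)) ∘ₗ
          (γ.symm.toLinearMap ∘ₗ β.toLinearMap ∘ₗ γ.toLinearMap) with hL2
      have hL2app : ∀ t : H, L2 t
          = β.symm (b i * β (γ (rh.left j))) ⊗ₜ[K]
              ((b.coord i : Module.Dual K H) ⊗ₜ[K] γ.symm (β (γ t))) := by
        intro t; simp [hL2]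
      calc ∑ m ∈ (ry j).index, Coalgebra.counit (R := K) ((ry j).right m) •
            (β.symm (b i * β (γ (rh.left j))) ⊗ₜ[K]
              ((b.coord i : Module.Dual K H) ⊗ₜ[K] γ.symm (β (γ ((ry j).left m)))))
          = ∑ m ∈ (ry j).index, L2 (Coalgebra.counit (R := K) ((ry j).right m) •
              (ry j).left m) := by
            refine Finset.sum_congr rfl fun m _ => ?_
            rw [map_smul, hL2app]
        _ = L2 (∑ m ∈ (ry j).index, Coalgebra.counit (R := K) ((ry j).right m) •
              (ry j).left m) := (map_sum _ _ _).symm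
        _ = _ := by rw [DCPAux.counit_smul_left (rh.right j) (ry j), hL2app]
    -- Step 9 : done
    refine Finset.sum_congr rfl fun j _ => Finset.sum_congr rfl fun i _ => ?_
    rw [hβsm, LinearEquiv.symm_apply_apply]
end
end

section
/- Let H be a finite dimensional Hopf algebra. Define R_{(α,β),(γ,δ)} = Σᵢ (ε ⋈ β⁻¹(eᵢ)) ⊗ (eⁱ ⋈ 1) ∈ (H* ⋈ H_(α,β)) ⊗ (H* ⋈ H_(γ,δ)). Then R is invariant under the diagonal crossing action: (ξ_(μ,ν) ⊗ ξ_(μ,ν))(R_{(α,β),(γ,δ)}) = R_{(μ,ν)*(α,β)*(μ,ν)⁻¹, (μ,ν)*(γ,δ)*(μ,ν)⁻¹} for all Hopf automorphisms μ, ν. -/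
open TensorProduct LinearMap

noncomputable section

lemma key_sum {K H M : Type} [Field K] [AddCommGroup H] [Module K H]
    [AddCommMonoid M] [Module K M] {ι : Type} [Fintype ι] [DecidableEq ι]
    (b : Module.Basis ι K H) (Φ : H →ₗ[K] Module.Dual K H →ₗ[K] M) (g : H →ₗ[K] H) :
    ∑ i, Φ (g (b i)) (b.coord i) = ∑ i, Φ (b i) (b.coord i ∘ₗ g) := by
  have expand : ∀ p : Module.Dual K H, p = ∑ i, p (b i) • b.coord i := by
    intro p
    conv_lhs => rw [← b.dualBasis.sum_repr p]
    simp [Module.Basis.dualBasis_repr, Module.Basis.coe_dualBasis]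
  have step1 : ∀ i, g (b i) = ∑ j, b.coord j (g (b i)) • b j := by
    intro i
    conv_lhs => rw [← b.sum_repr (g (b i))]
    simp [Module.Basis.coord_apply]
  calc ∑ i, Φ (g (b i)) (b.coord i)
      = ∑ i, ∑ j, b.coord j (g (b i)) • Φ (b j) (b.coord i) := by
        refine Finset.sum_congr rfl fun i _ => ?_
        conv_lhs => rw [step1 i]
        simp only [map_sum, map_smul, LinearMap.sum_apply, LinearMap.smul_apply]
    _ = ∑ j, ∑ i, b.coord j (g (b i)) • Φ (b j) (b.coord i) := Finset.sum_comm
    _ = ∑ j, Φ (b j) (b.coord j ∘ₗ g) := by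
        refine Finset.sum_congr rfl fun j _ => ?_
        conv_rhs => rw [expand (b.coord j ∘ₗ g)]
        simp [map_sum, map_smul]


/-- The generalized R-matrix is invariant under the diagonal crossing action. -/
theorem stmt14 (K H : Type) [Field K] [Ring H] [HopfAlgebra K H] [FiniteDimensional K H]
    (Sinv : H →ₗ[K] H)
    (hS1 : Sinv ∘ₗ HopfAlgebra.antipode (R := K) (A := H) = LinearMap.id)
    (hS2 : HopfAlgebra.antipode (R := K) (A := H) ∘ₗ Sinv = LinearMap.id)
    (α β γ δ μ ν : H ≃ₗ[K] H)
    (hα : DCP.IsHopfAut K α)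
    (hβ : DCP.IsHopfAut K β)
    (hγ : DCP.IsHopfAut K γ)
    (hδ : DCP.IsHopfAut K δ)
    (hμ : DCP.IsHopfAut K μ)
    (hν : DCP.IsHopfAut K ν)
    (ι : Type) [Fintype ι] [DecidableEq ι] (b : Module.Basis ι K H) :
    TensorProduct.map (DCP.xiMap K μ ν α) (DCP.xiMap K μ ν γ)
      (∑ i, ((Coalgebra.counit : Module.Dual K H) ⊗ₜ[K] β.symm (b i)) ⊗ₜ[K]
        (b.coord i ⊗ₜ[K] (1 : H)))
    = ∑ i, ((Coalgebra.counit : Module.Dual K H) ⊗ₜ[K]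
        ((μ.toLinearMap ∘ₗ α.symm.toLinearMap ∘ₗ ν.symm.toLinearMap ∘ₗ α.toLinearMap ∘ₗ
          β.symm.toLinearMap ∘ₗ ν.toLinearMap ∘ₗ μ.symm.toLinearMap) (b i))) ⊗ₜ[K]
        (b.coord i ⊗ₜ[K] (1 : H)) := by
  classical
  -- the two linear maps of interest
  set f : H →ₗ[K] H := μ.toLinearMap ∘ₗ α.symm.toLinearMap ∘ₗ ν.symm.toLinearMap ∘ₗ
      α.toLinearMap ∘ₗ β.symm.toLinearMap with hf
  set g : H →ₗ[K] H := ν.toLinearMap ∘ₗ μ.symm.toLinearMap with hg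
  -- counit facts
  have hεν : ∀ x : H, (Coalgebra.counit : H →ₗ[K] K) (ν x) = Coalgebra.counit x := by
    intro x; exact LinearMap.ext_iff.mp hν.2.2.2 x
  have hεμs : ∀ x : H, (Coalgebra.counit : H →ₗ[K] K) (μ.symm x) = Coalgebra.counit x := by
    intro x
    have := LinearMap.ext_iff.mp hμ.2.2.2 (μ.symm x)
    simpa using this.symm
  have hcounit : ((ν.toLinearMap ∘ₗ μ.symm.toLinearMap).dualMap)
      (Coalgebra.counit : Module.Dual K H) = Coalgebra.counit := by
    ext x
    simp [LinearMap.dualMap_apply, hεν, hεμs]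
  -- unit facts
  have hν1s : ν.symm (1 : H) = 1 := by
    apply ν.injective; rw [ν.apply_symm_apply, hν.2.1]
  have hγ1s : γ.symm (1 : H) = 1 := by
    apply γ.injective; rw [γ.apply_symm_apply, hγ.2.1]
  have hone : (μ.toLinearMap ∘ₗ γ.symm.toLinearMap ∘ₗ ν.symm.toLinearMap ∘ₗ γ.toLinearMap)
      (1 : H) = 1 := by
    simp only [LinearMap.comp_apply, LinearEquiv.coe_coe]
    rw [hγ.2.1, hν1s, hγ1s, hμ.2.1]
  -- the bilinear assembling map
  set A : H →ₗ[K] Module.Dual K H ⊗[K] H :=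
    (TensorProduct.mk K (Module.Dual K H) H (Coalgebra.counit : Module.Dual K H)) ∘ₗ f with hA
  set B : Module.Dual K H →ₗ[K] Module.Dual K H ⊗[K] H :=
    (TensorProduct.mk K (Module.Dual K H) H).flip 1 with hB
  set Φ : H →ₗ[K] Module.Dual K H →ₗ[K]
      (Module.Dual K H ⊗[K] H) ⊗[K] (Module.Dual K H ⊗[K] H) :=
    ((TensorProduct.mk K (Module.Dual K H ⊗[K] H) (Module.Dual K H ⊗[K] H)) ∘ₗ A).compl₂ B
    with hΦ
  have hΦ_apply : ∀ (h : H) (p : Module.Dual K H),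
      Φ h p = ((Coalgebra.counit : Module.Dual K H) ⊗ₜ[K] f h) ⊗ₜ[K] (p ⊗ₜ[K] (1 : H)) := by
    intro h p; rfl
  trans (∑ i, Φ (b i) (b.coord i ∘ₗ g))
  · rw [map_sum]
    refine Finset.sum_congr rfl fun i _ => ?_
    rw [hΦ_apply]
    simp only [DCP.xiMap, TensorProduct.map_tmul, hcounit, hone]
    congr 1
  trans (∑ i, Φ (g (b i)) (b.coord i))
  · exact (key_sum b Φ g).symm
  · refine Finset.sum_congr rfl fun i _ => ?_
    rw [hΦ_apply]
    simp [hf, hg]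
end
end

section
/- Let H be a finite dimensional Hopf algebra. R_{(α,β),(γ,δ)} = Σᵢ (ε ⋈ β⁻¹(eᵢ)) ⊗ (eⁱ ⋈ 1) satisfies (Δ_{(α,β),(γ,δ)} ⊗ id)(R_{(α,β)*(γ,δ),(μ,ν)}) = ((id ⊗ ξ_{(γ,δ)⁻¹})(R_{(α,β),(γ,δ)*(μ,ν)*(γ,δ)⁻¹}))₁₃ (R_{(γ,δ),(μ,ν)})₂₃. -/
open TensorProduct LinearMap

noncomputable section

section Aux

open Coalgebra

variable {K H : Type} [Field K] [Ring H] [HopfAlgebra K H]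

lemma Aux.sum_counit_smul {a : H} (r : Coalgebra.Repr K a (H × H)) :
    ∑ i ∈ r.index, counit (R := K) (r.left i) • r.right i = a := by
  have h := congrArg (TensorProduct.lid K H) (Coalgebra.sum_counit_tmul_eq r)
  rw [map_sum] at h
  simpa using h

lemma Aux.sum_smul_counit {a : H} (r : Coalgebra.Repr K a (H × H)) :
    ∑ i ∈ r.index, counit (R := K) (r.right i) • r.left i = a := by
  have h := congrArg (TensorProduct.rid K H) (Coalgebra.sum_tmul_counit_eq r)
  rw [map_sum] at h
  simpa using h

lemma Aux.counit_antipode (x : H) :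
    counit (R := K) (HopfAlgebra.antipode (R := K) x) = counit (R := K) x := by
  have r := Coalgebra.Repr.arbitrary K x
  have h1 := HopfAlgebra.sum_antipode_mul_eq_smul (R := K) r
  have h2 := congrArg (counit (R := K)) h1
  rw [map_sum, map_smul] at h2
  simp only [Bialgebra.counit_mul, Bialgebra.counit_one, smul_eq_mul, mul_one] at h2
  calc counit (R := K) (HopfAlgebra.antipode (R := K) x)
      = counit (R := K) (HopfAlgebra.antipode (R := K)
          (∑ i ∈ r.index, counit (R := K) (r.right i) • r.left i)) := by
        rw [Aux.sum_smul_counit]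
    _ = ∑ i ∈ r.index, counit (R := K) (r.right i) *
          counit (R := K) (HopfAlgebra.antipode (R := K) (r.left i)) := by
        rw [map_sum, map_sum]; simp [smul_eq_mul]
    _ = _ := by rw [← h2]; exact Finset.sum_congr rfl fun i _ => mul_comm _ _

lemma Aux.antipode_one : HopfAlgebra.antipode (R := K) (1 : H) = 1 := by
  have h := HopfAlgebra.mul_antipode_rTensor_comul_apply (R := K) (a := (1 : H))
  rw [Bialgebra.comul_one, Algebra.TensorProduct.one_def] at h
  simpa using h

lemma Aux.counit_Sinv (Sinv : H →ₗ[K] H)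
    (hS2 : HopfAlgebra.antipode (R := K) (A := H) ∘ₗ Sinv = LinearMap.id) (x : H) :
    counit (R := K) (Sinv x) = counit (R := K) x := by
  have := Aux.counit_antipode (K := K) (Sinv x)
  rw [show HopfAlgebra.antipode (R := K) (Sinv x) = x from congr($hS2 x)] at this
  exact this.symm

lemma Aux.Sinv_one (Sinv : H →ₗ[K] H)
    (hS1 : Sinv ∘ₗ HopfAlgebra.antipode (R := K) (A := H) = LinearMap.id) :
    Sinv (1 : H) = 1 := by
  have := congr($hS1 (1 : H))
  rwa [LinearMap.comp_apply, Aux.antipode_one, LinearMap.id_apply] at this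

lemma Aux.convMul_counit_left (q : Module.Dual K H) :
    DCP.convMul K (counit : Module.Dual K H) q = q := by
  ext x
  have r := Coalgebra.Repr.arbitrary K x
  rw [DCP.convMul_apply, ← r.eq, map_sum, map_sum]
  have : q x = q (∑ i ∈ r.index, counit (R := K) (r.left i) • r.right i) := by
    rw [Aux.sum_counit_smul]
  rw [this, map_sum]
  exact Finset.sum_congr rfl fun i _ => by simp

lemma Aux.counit_mulLeft_mulRight (a c : H) :
    (counit : Module.Dual K H) ∘ₗ LinearMap.mulLeft K a ∘ₗ LinearMap.mulRight K c
      = (counit (R := K) a * counit (R := K) c) • (counit : Module.Dual K H) := by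
  ext x
  simp only [LinearMap.comp_apply, LinearMap.mulLeft_apply, LinearMap.mulRight_apply,
    LinearMap.smul_apply, Bialgebra.counit_mul, smul_eq_mul]
  ring


lemma Aux.map_map_tmul {A B C D E F : Type} [AddCommMonoid A] [Module K A]
    [AddCommMonoid B] [Module K B] [AddCommMonoid C] [Module K C]
    [AddCommMonoid D] [Module K D] [AddCommMonoid E] [Module K E]
    [AddCommMonoid F] [Module K F]
    (f : C →ₗ[K] E) (g : D →ₗ[K] F) (u : A →ₗ[K] C) (v : B →ₗ[K] D) (t : A ⊗[K] B) :
    TensorProduct.map f g (TensorProduct.map u v t)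
      = TensorProduct.map (f ∘ₗ u) (g ∘ₗ v) t := by
  rw [TensorProduct.map_comp, LinearMap.comp_apply]

lemma Aux.aut_symm_comul (f : H ≃ₗ[K] H)
    (hf : Coalgebra.comul ∘ₗ f.toLinearMap
      = TensorProduct.map f.toLinearMap f.toLinearMap ∘ₗ Coalgebra.comul) (x : H) :
    comul (R := K) (f.symm x)
      = TensorProduct.map f.symm.toLinearMap f.symm.toLinearMap (comul (R := K) x) := by
  have h1 : ∀ t : H ⊗[K] H, TensorProduct.map f.symm.toLinearMap f.symm.toLinearMap
      (TensorProduct.map f.toLinearMap f.toLinearMap t) = t := by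
    intro t
    induction t using TensorProduct.induction_on with
    | zero => simp
    | tmul a c => simp
    | add s t hs ht => simp [map_add, hs, ht]
  have h2 : comul (R := K) (f (f.symm x))
      = TensorProduct.map f.toLinearMap f.toLinearMap (comul (R := K) (f.symm x)) :=
    congr($hf (f.symm x))
  calc comul (R := K) (f.symm x)
      = TensorProduct.map f.symm.toLinearMap f.symm.toLinearMap
          (TensorProduct.map f.toLinearMap f.toLinearMap (comul (R := K) (f.symm x))) :=
        (h1 _).symm
    _ = TensorProduct.map f.symm.toLinearMap f.symm.toLinearMap
          (comul (R := K) (f (f.symm x))) := by rw [← h2]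
    _ = _ := by rw [f.apply_symm_apply]

lemma Aux.aut_symm_one (f : H ≃ₗ[K] H) (hf : f (1 : H) = 1) : f.symm (1 : H) = 1 := by
  apply f.injective; rw [f.apply_symm_apply, hf]

lemma Aux.aut_symm_counit (f : H ≃ₗ[K] H)
    (hf : (counit : H →ₗ[K] K) ∘ₗ f.toLinearMap = counit) (x : H) :
    counit (R := K) (f.symm x) = counit (R := K) x := by
  conv_rhs => rw [← f.apply_symm_apply x]
  exact congr($hf (f.symm x)).symm

@[simp] lemma Aux.lift3_tmul {W : Type} [AddCommMonoid W] [Module K W]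
    (Φ : H →ₗ[K] H →ₗ[K] H →ₗ[K] W) (x y z : H) :
    DCP.lift3 K Φ (x ⊗ₜ[K] (y ⊗ₜ[K] z)) = Φ x y z := rfl

@[simp] lemma Aux.coreTri_apply (u v : H →ₗ[K] H)
    (F : Module.Dual K H →ₗ[K] Module.Dual K H) (g : H →ₗ[K] H) (p : Module.Dual K H)
    (h₁ h₂ h₃ : H) :
    DCP.coreTri K u v F g p h₁ h₂ h₃
      = F (p ∘ₗ LinearMap.mulLeft K (u h₃) ∘ₗ LinearMap.mulRight K (v h₁)) ⊗ₜ[K] g h₂ := rfl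

@[simp] lemma Aux.tmul₂_tmul {A B : Type} [AddCommMonoid A] [Module K A]
    [AddCommMonoid B] [Module K B]
    (M1 : A →ₗ[K] A →ₗ[K] A) (M2 : B →ₗ[K] B →ₗ[K] B) (a c : A) (x y : B) :
    DCP.tmul₂ K M1 M2 (a ⊗ₜ[K] x) (c ⊗ₜ[K] y) = M1 a c ⊗ₜ[K] M2 x y := by
  simp [DCP.tmul₂]


lemma Aux.dprod_counit_counit_one (α β Sinv : H →ₗ[K] H)
    (hα : ∀ x, counit (R := K) (α x) = counit (R := K) x)
    (hu : ∀ x, counit (R := K) (Sinv (β x)) = counit (R := K) x) (h : H) :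
    DCP.dprod K α β Sinv counit h counit 1 = (counit : Module.Dual K H) ⊗ₜ[K] h := by
  have term : ∀ x y z : H,
      DCP.lift3 K (DCP.coreTri K (Sinv ∘ₗ β) α (DCP.convMul K counit)
          (LinearMap.mulRight K (1 : H)) counit) (x ⊗ₜ[K] (y ⊗ₜ[K] z))
        = (counit (R := K) z * counit (R := K) x) • ((counit : Module.Dual K H) ⊗ₜ[K] y) := by
    intro x y z
    rw [Aux.lift3_tmul, Aux.coreTri_apply, LinearMap.comp_apply,
      Aux.counit_mulLeft_mulRight, map_smul, Aux.convMul_counit_left, hu, hα]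
    simp [smul_tmul']
  have r := Coalgebra.Repr.arbitrary K h
  have key : DCP.comul2 K h
      = ∑ i ∈ r.index, (r.left i) ⊗ₜ[K] (comul (R := K) (r.right i)) := by
    rw [DCP.comul2, LinearMap.comp_apply, ← r.eq, map_sum]
    simp
  rw [DCP.dprod, key, map_sum]
  calc ∑ i ∈ r.index, DCP.lift3 K (DCP.coreTri K (Sinv ∘ₗ β) α (DCP.convMul K counit)
          (LinearMap.mulRight K (1 : H)) counit) (r.left i ⊗ₜ[K] comul (R := K) (r.right i))
      = ∑ i ∈ r.index, counit (R := K) (r.left i)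
          • ((counit : Module.Dual K H) ⊗ₜ[K] r.right i) := by
        refine Finset.sum_congr rfl fun i _ => ?_
        have r2 := Coalgebra.Repr.arbitrary K (r.right i)
        rw [← r2.eq, tmul_sum, map_sum]
        calc ∑ j ∈ r2.index, DCP.lift3 K (DCP.coreTri K (Sinv ∘ₗ β) α (DCP.convMul K counit)
                (LinearMap.mulRight K (1 : H)) counit)
                (r.left i ⊗ₜ[K] (r2.left j ⊗ₜ[K] r2.right j))
            = ∑ j ∈ r2.index, counit (R := K) (r.left i)
                • ((counit : Module.Dual K H) ⊗ₜ[K] (counit (R := K) (r2.right j) • r2.left j)) := by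
              refine Finset.sum_congr rfl fun j _ => ?_
              rw [term]
              rw [tmul_smul, smul_smul, mul_comm]
          _ = counit (R := K) (r.left i) • ((counit : Module.Dual K H) ⊗ₜ[K] r.right i) := by
              rw [← Finset.smul_sum, ← tmul_sum, Aux.sum_smul_counit]
    _ = (counit : Module.Dual K H) ⊗ₜ[K] h := by
        simp only [← tmul_smul, ← tmul_sum]
        rw [Aux.sum_counit_smul]

lemma Aux.dprod_one (α β Sinv : H →ₗ[K] H) (hα1 : α 1 = 1) (hβS1 : Sinv (β 1) = 1)
    (p q : Module.Dual K H) (l : H) :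
    DCP.dprod K α β Sinv p 1 q l = (DCP.convMul K p q) ⊗ₜ[K] l := by
  have key : DCP.comul2 K (1 : H) = (1 : H) ⊗ₜ[K] ((1 : H) ⊗ₜ[K] (1 : H)) := by
    rw [DCP.comul2, LinearMap.comp_apply, Bialgebra.comul_one, Algebra.TensorProduct.one_def]
    simp [Bialgebra.comul_one, Algebra.TensorProduct.one_def]
  rw [DCP.dprod, key, Aux.lift3_tmul, Aux.coreTri_apply, LinearMap.comp_apply, hα1, hβS1]
  simp [LinearMap.mulLeft_one, LinearMap.mulRight_one]


lemma Aux.dcomul_counit [FiniteDimensional K H] :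
    DCP.dcomul K (counit : Module.Dual K H)
      = (counit : Module.Dual K H) ⊗ₜ[K] (counit : Module.Dual K H) := by
  rw [DCP.dcomul, LinearMap.comp_apply, LinearEquiv.coe_coe, LinearEquiv.symm_apply_eq]
  refine TensorProduct.ext' fun x y => ?_
  simp [TensorProduct.dualDistribEquiv, TensorProduct.dualDistribEquivOfBasis,
    TensorProduct.dualDistrib_apply]

set_option synthInstance.maxHeartbeats 1000000 in
lemma Aux.tttComm_tmul (p q : Module.Dual K H) (t : H ⊗[K] H) :
    (TensorProduct.tensorTensorTensorComm K (Module.Dual K H) (Module.Dual K H) H H)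
        ((p ⊗ₜ[K] q) ⊗ₜ[K] t)
      = TensorProduct.map (TensorProduct.mk K (Module.Dual K H) H p)
          (TensorProduct.mk K (Module.Dual K H) H q) t := by
  induction t using TensorProduct.induction_on with
  | zero => simp
  | tmul x y => simp
  | add s t hs ht => simp only [tmul_add, map_add, hs, ht]

set_option synthInstance.maxHeartbeats 1000000 in
lemma Aux.deltaComp_counit [FiniteDimensional K H] (c e : H →ₗ[K] H) (h : H) :
    DCP.deltaComp K c e ((counit : Module.Dual K H) ⊗ₜ[K] h)
      = TensorProduct.map (TensorProduct.mk K (Module.Dual K H) H counit ∘ₗ c)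
          (TensorProduct.mk K (Module.Dual K H) H counit ∘ₗ e) (comul (R := K) h) := by
  simp only [DCP.deltaComp, LinearMap.comp_apply, LinearEquiv.coe_coe,
    TensorProduct.map_tmul, Aux.dcomul_counit, TensorProduct.comm_tmul,
    Aux.tttComm_tmul, Aux.map_map_tmul]

lemma Aux.sum_coord_smul {W : Type} [AddCommMonoid W] [Module K W]
    {ι : Type} [Fintype ι] (b : Module.Basis ι K H) (u : H →ₗ[K] W) (z : H) :
    ∑ i, b.coord i z • u (b i) = u z := by
  calc ∑ i, b.coord i z • u (b i) = u (∑ i, b.repr z i • b i) := by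
        rw [map_sum]; simp [Module.Basis.coord_apply]
    _ = u z := by rw [b.sum_repr]

lemma Aux.double_basis_sum {W W' : Type} [AddCommMonoid W] [Module K W]
    [AddCommMonoid W'] [Module K W']
    {ι : Type} [Fintype ι] (b : Module.Basis ι K H) (g : H →ₗ[K] H)
    (u : H →ₗ[K] W) (v : H →ₗ[K] W') (t : H ⊗[K] H) :
    ∑ i, ∑ j, (TensorProduct.lid K K)
        (TensorProduct.map (b.coord i ∘ₗ g) (b.coord j) t) • (u (b i) ⊗ₜ[K] v (b j))
      = TensorProduct.map (u ∘ₗ g) v t := by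
  induction t using TensorProduct.induction_on with
  | zero => simp
  | tmul x y =>
      simp only [TensorProduct.map_tmul, TensorProduct.lid_tmul, LinearMap.comp_apply]
      conv_rhs => rw [← Aux.sum_coord_smul b u (g x), ← Aux.sum_coord_smul b v y]
      rw [sum_tmul]
      refine Finset.sum_congr rfl fun i _ => ?_
      rw [tmul_sum]
      refine Finset.sum_congr rfl fun j _ => ?_
      rw [tmul_smul, smul_tmul', smul_tmul', smul_smul, smul_eq_mul, mul_comm]
  | add s t hs ht => simp only [map_add, add_smul, Finset.sum_add_distrib, hs, ht]


lemma Aux.map_congr {A B C D : Type} [AddCommMonoid A] [Module K A]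
    [AddCommMonoid B] [Module K B] [AddCommMonoid C] [Module K C]
    [AddCommMonoid D] [Module K D]
    {f f' : A →ₗ[K] C} {g g' : B →ₗ[K] D} (hf : f = f') (hg : g = g') (t : A ⊗[K] B) :
    TensorProduct.map f g t = TensorProduct.map f' g' t := by rw [hf, hg]

end Aux



set_option synthInstance.maxHeartbeats 1000000 in
set_option maxHeartbeats 2000000 in
/-- `(Δ_{(α,β),(γ,δ)} ⊗ id)(R_{(α,β)*(γ,δ),(μ,ν)})
  = ((id ⊗ ξ_{(γ,δ)⁻¹})(R_{(α,β),(γ,δ)*(μ,ν)*(γ,δ)⁻¹}))₁₃ (R_{(γ,δ),(μ,ν)})₂₃`. -/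
theorem stmt16 (K H : Type) [Field K] [Ring H] [HopfAlgebra K H] [FiniteDimensional K H]
    (Sinv : H →ₗ[K] H)
    (hS1 : Sinv ∘ₗ HopfAlgebra.antipode (R := K) (A := H) = LinearMap.id)
    (hS2 : HopfAlgebra.antipode (R := K) (A := H) ∘ₗ Sinv = LinearMap.id)
    (α β γ δ μ ν : H ≃ₗ[K] H)
    (hα : DCP.IsHopfAut K α)
    (hβ : DCP.IsHopfAut K β)
    (hγ : DCP.IsHopfAut K γ)
    (hδ : DCP.IsHopfAut K δ)
    (hμ : DCP.IsHopfAut K μ)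
    (hν : DCP.IsHopfAut K ν)
    (Ma : Module.Dual K H ⊗[K] H →ₗ[K] Module.Dual K H ⊗[K] H →ₗ[K] Module.Dual K H ⊗[K] H)
    (hMa : ∀ (p : Module.Dual K H) (h : H) (q : Module.Dual K H) (l : H),
      Ma (p ⊗ₜ[K] h) (q ⊗ₜ[K] l) = DCP.dprod K (α.toLinearMap) (β.toLinearMap) Sinv p h q l)
    (Mc : Module.Dual K H ⊗[K] H →ₗ[K] Module.Dual K H ⊗[K] H →ₗ[K] Module.Dual K H ⊗[K] H)
    (hMc : ∀ (p : Module.Dual K H) (h : H) (q : Module.Dual K H) (l : H),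
      Mc (p ⊗ₜ[K] h) (q ⊗ₜ[K] l) = DCP.dprod K (γ.toLinearMap) (δ.toLinearMap) Sinv p h q l)
    (Mm : Module.Dual K H ⊗[K] H →ₗ[K] Module.Dual K H ⊗[K] H →ₗ[K] Module.Dual K H ⊗[K] H)
    (hMm : ∀ (p : Module.Dual K H) (h : H) (q : Module.Dual K H) (l : H),
      Mm (p ⊗ₜ[K] h) (q ⊗ₜ[K] l) = DCP.dprod K (μ.toLinearMap) (ν.toLinearMap) Sinv p h q l)
    (ι : Type) [Fintype ι] [DecidableEq ι] (b : Module.Basis ι K H) :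
    LinearMap.rTensor (Module.Dual K H ⊗[K] H)
        (DCP.deltaComp K γ.toLinearMap
          (γ.symm.toLinearMap ∘ₗ β.toLinearMap ∘ₗ γ.toLinearMap))
        (∑ i, ((Coalgebra.counit : Module.Dual K H) ⊗ₜ[K]
            ((γ.symm.toLinearMap ∘ₗ β.symm.toLinearMap ∘ₗ γ.toLinearMap ∘ₗ
              δ.symm.toLinearMap) (b i))) ⊗ₜ[K] (b.coord i ⊗ₜ[K] (1 : H)))
    = DCP.tmul₂ K (DCP.tmul₂ K Ma Mc) Mm
        (TensorProduct.map
          ((TensorProduct.mk K (Module.Dual K H ⊗[K] H) (Module.Dual K H ⊗[K] H)).flip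
            ((Coalgebra.counit : Module.Dual K H) ⊗ₜ[K] (1 : H)))
          LinearMap.id
          (TensorProduct.map LinearMap.id
            (DCP.xiMap K γ.symm (γ.symm.trans (δ.symm.trans γ)) (γ.symm.trans (μ.trans γ)))
            (∑ i, ((Coalgebra.counit : Module.Dual K H) ⊗ₜ[K] β.symm (b i)) ⊗ₜ[K]
              (b.coord i ⊗ₜ[K] (1 : H)))))
        (∑ j, (((Coalgebra.counit : Module.Dual K H) ⊗ₜ[K] (1 : H)) ⊗ₜ[K]
            ((Coalgebra.counit : Module.Dual K H) ⊗ₜ[K] δ.symm (b j))) ⊗ₜ[K]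
          (b.coord j ⊗ₜ[K] (1 : H))) := by
  classical
  have hScounit : ∀ x : H, Coalgebra.counit (R := K) (Sinv x) = Coalgebra.counit (R := K) x :=
    Aux.counit_Sinv Sinv hS2
  have hαc : ∀ x : H, Coalgebra.counit (R := K) (α x) = Coalgebra.counit (R := K) x :=
    fun x => congr($(hα.2.2.2) x)
  have hβc : ∀ x : H, Coalgebra.counit (R := K) (β x) = Coalgebra.counit (R := K) x :=
    fun x => congr($(hβ.2.2.2) x)
  have huβ : ∀ x : H, Coalgebra.counit (R := K) (Sinv (β x)) = Coalgebra.counit (R := K) x :=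
    fun x => (hScounit _).trans (hβc x)
  have hSδ1 : Sinv (δ (1 : H)) = 1 := by rw [hδ.2.1]; exact Aux.Sinv_one Sinv hS1
  have hSν1 : Sinv (ν (1 : H)) = 1 := by rw [hν.2.1]; exact Aux.Sinv_one Sinv hS1
  have hγs1 : γ.symm (1 : H) = 1 := Aux.aut_symm_one γ hγ.2.1
  have hδs1 : δ.symm (1 : H) = 1 := Aux.aut_symm_one δ hδ.2.1
  have hμs1 : μ.symm (1 : H) = 1 := Aux.aut_symm_one μ hμ.2.1
  have hcγ : ∀ x : H, Coalgebra.comul (R := K) (γ x)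
      = TensorProduct.map γ.toLinearMap γ.toLinearMap (Coalgebra.comul x) :=
    fun x => congr($(hγ.2.2.1) x)
  have hcγs := Aux.aut_symm_comul γ hγ.2.2.1
  have hcβs := Aux.aut_symm_comul β hβ.2.2.1
  have hcδs := Aux.aut_symm_comul δ hδ.2.2.1
  -- step A : rewrite the left-hand side
  rw [map_sum]
  have chain : ∀ x : H,
      TensorProduct.map
        (TensorProduct.mk K (Module.Dual K H) H Coalgebra.counit ∘ₗ γ.toLinearMap)
        (TensorProduct.mk K (Module.Dual K H) H Coalgebra.counit ∘ₗ
          (γ.symm.toLinearMap ∘ₗ β.toLinearMap ∘ₗ γ.toLinearMap))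
        (Coalgebra.comul (R := K) ((γ.symm.toLinearMap ∘ₗ β.symm.toLinearMap ∘ₗ γ.toLinearMap ∘ₗ
          δ.symm.toLinearMap) x))
      = TensorProduct.map
          (TensorProduct.mk K (Module.Dual K H) H Coalgebra.counit ∘ₗ
            (β.symm.toLinearMap ∘ₗ γ.toLinearMap ∘ₗ δ.symm.toLinearMap))
          (TensorProduct.mk K (Module.Dual K H) H Coalgebra.counit ∘ₗ δ.symm.toLinearMap)
          (Coalgebra.comul (R := K) x) := by
    intro x
    have hx : (γ.symm.toLinearMap ∘ₗ β.symm.toLinearMap ∘ₗ γ.toLinearMap ∘ₗ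
        δ.symm.toLinearMap) x = γ.symm (β.symm (γ (δ.symm x))) := rfl
    rw [hx, hcγs, hcβs, hcγ, hcδs, Aux.map_map_tmul, Aux.map_map_tmul, Aux.map_map_tmul,
      Aux.map_map_tmul]
    exact Aux.map_congr (by ext z; simp) (by ext z; simp) _
  simp only [LinearMap.rTensor_tmul, Aux.deltaComp_counit, chain]
  -- step B : rewrite the right-hand side
  have hxi : ∀ i, DCP.xiMap K γ.symm (γ.symm.trans (δ.symm.trans γ)) (γ.symm.trans (μ.trans γ))
      (b.coord i ⊗ₜ[K] (1 : H))
      = (b.coord i ∘ₗ (γ.toLinearMap ∘ₗ δ.symm.toLinearMap)) ⊗ₜ[K] (1 : H) := by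
    intro i
    rw [DCP.xiMap, TensorProduct.map_tmul]
    congr 1
    · ext z; simp
    · simp [hγ.2.1, hμ.2.1, hδ.2.1, hγs1, hδs1, hμs1]
  rw [show TensorProduct.map LinearMap.id
        (DCP.xiMap K γ.symm (γ.symm.trans (δ.symm.trans γ)) (γ.symm.trans (μ.trans γ)))
        (∑ i, ((Coalgebra.counit : Module.Dual K H) ⊗ₜ[K] β.symm (b i)) ⊗ₜ[K]
          (b.coord i ⊗ₜ[K] (1 : H)))
      = ∑ i, ((Coalgebra.counit : Module.Dual K H) ⊗ₜ[K] β.symm (b i)) ⊗ₜ[K]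
          ((b.coord i ∘ₗ (γ.toLinearMap ∘ₗ δ.symm.toLinearMap)) ⊗ₜ[K] (1 : H)) from by
    rw [map_sum]; exact Finset.sum_congr rfl fun i _ => by
      rw [TensorProduct.map_tmul, hxi i]; rfl]
  rw [map_sum]
  simp only [TensorProduct.map_tmul, LinearMap.flip_apply, TensorProduct.mk_apply,
    LinearMap.id_coe, id_eq, map_sum, LinearMap.sum_apply]
  have hda : ∀ i, Ma ((Coalgebra.counit : Module.Dual K H) ⊗ₜ[K] β.symm (b i))
      ((Coalgebra.counit : Module.Dual K H) ⊗ₜ[K] (1 : H))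
      = (Coalgebra.counit : Module.Dual K H) ⊗ₜ[K] β.symm (b i) := fun i => by
    rw [hMa]; exact Aux.dprod_counit_counit_one _ _ _ hαc huβ _
  have hdc : ∀ j, Mc ((Coalgebra.counit : Module.Dual K H) ⊗ₜ[K] (1 : H))
      ((Coalgebra.counit : Module.Dual K H) ⊗ₜ[K] δ.symm (b j))
      = (Coalgebra.counit : Module.Dual K H) ⊗ₜ[K] δ.symm (b j) := fun j => by
    rw [hMc, Aux.dprod_one _ _ _ hγ.2.1 hSδ1, Aux.convMul_counit_left]
  have hdm : ∀ i j, Mm ((b.coord i ∘ₗ (γ.toLinearMap ∘ₗ δ.symm.toLinearMap)) ⊗ₜ[K] (1 : H))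
      (b.coord j ⊗ₜ[K] (1 : H))
      = (DCP.convMul K (b.coord i ∘ₗ (γ.toLinearMap ∘ₗ δ.symm.toLinearMap)) (b.coord j))
          ⊗ₜ[K] (1 : H) := fun i j => by
    rw [hMm]; exact Aux.dprod_one _ _ _ hμ.2.1 hSν1 _ _ _
  simp only [Aux.tmul₂_tmul, hda, hdc, hdm]
  -- step C : the basis identity
  have star : ∑ i, (b.coord i) ⊗ₜ[K]
        (TensorProduct.map (γ.toLinearMap ∘ₗ δ.symm.toLinearMap) LinearMap.id
          (Coalgebra.comul (R := K) (b i)))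
      = ∑ i, ∑ j, (DCP.convMul K (b.coord i ∘ₗ (γ.toLinearMap ∘ₗ δ.symm.toLinearMap))
          (b.coord j)) ⊗ₜ[K] ((b i) ⊗ₜ[K] (b j)) := by
    apply (dualTensorHomEquivOfBasis (N := H ⊗[K] H) b).injective
    refine LinearMap.ext fun x => ?_
    simp only [map_sum, dualTensorHomEquivOfBasis_apply, LinearMap.sum_apply,
      dualTensorHom_apply]
    have hl : ∑ i, b.coord i x • (TensorProduct.map (γ.toLinearMap ∘ₗ δ.symm.toLinearMap)
        LinearMap.id (Coalgebra.comul (R := K) (b i)))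
        = TensorProduct.map (γ.toLinearMap ∘ₗ δ.symm.toLinearMap) LinearMap.id
            (Coalgebra.comul (R := K) x) := by
      have := Aux.sum_coord_smul b
        ((TensorProduct.map (γ.toLinearMap ∘ₗ δ.symm.toLinearMap) LinearMap.id) ∘ₗ
          (CoalgebraStruct.comul (R := K) (A := H))) x
      simpa using this
    have hr := Aux.double_basis_sum b (γ.toLinearMap ∘ₗ δ.symm.toLinearMap)
      (LinearMap.id (R := K) (M := H)) (LinearMap.id (R := K) (M := H))
      (Coalgebra.comul (R := K) x)
    simp only [LinearMap.id_coe, id_eq, LinearMap.id_comp] at hr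
    rw [hl]
    simp only [DCP.convMul_apply, LinearEquiv.coe_coe]
    rw [hr]
  have final := congrArg
    (⇑((TensorProduct.map
        (TensorProduct.map
          (TensorProduct.mk K (Module.Dual K H) H Coalgebra.counit ∘ₗ β.symm.toLinearMap)
          (TensorProduct.mk K (Module.Dual K H) H Coalgebra.counit ∘ₗ δ.symm.toLinearMap))
        ((TensorProduct.mk K (Module.Dual K H) H).flip (1 : H))) ∘ₗ
      (TensorProduct.comm K (Module.Dual K H) (H ⊗[K] H)).toLinearMap)) star
  simp only [map_sum, LinearMap.comp_apply, LinearEquiv.coe_coe, TensorProduct.comm_tmul,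
    TensorProduct.map_tmul, LinearMap.flip_apply, TensorProduct.mk_apply,
    Aux.map_map_tmul] at final
  rw [Finset.sum_comm] at final
  refine Eq.trans (Finset.sum_congr rfl fun i _ => ?_) final
  congr 1
end
end

section
/- Let H be a group and KH its group algebra with standard Hopf structure. For group elements α, β, γ acting as Hopf automorphisms by conjugation, the diagonal crossed product K(H) ⋈ KH_(α,β) of the function algebra (with finite support, for H infinite) and the group algebra has multiplication (δ_p ⋈ g)(δ_q ⋈ h) = δ_p δ_{βgβ⁻¹ q αg⁻¹α⁻¹} ⋈ gh, where δ_p δ_r = [p = r] δ_p. This multiplication is associative with unit (Σ_p δ_p) ⋈ e in the multiplier sense; in particular for finite H it is a unital associative algebra. -/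
open TensorProduct LinearMap


/-- The diagonal crossed product multiplication on `K(H) ⋈ KH_(α,β)` for a group `H`. -/
noncomputable def dp {K H : Type} [Field K] [Group H] [DecidableEq H] (α β : H)
    (x y : (H × H) →₀ K) : (H × H) →₀ K :=
  x.sum fun pg c => y.sum fun qh d =>
    if pg.1 = β * pg.2 * β⁻¹ * qh.1 * α * pg.2⁻¹ * α⁻¹ then
      Finsupp.single (pg.1, pg.2 * qh.2) (c * d)
    else 0

section aux

variable {K H : Type} [Field K] [Group H] [DecidableEq H] (α β : H)

lemma dp_zero_left (y : (H × H) →₀ K) : dp α β 0 y = 0 := by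
  simp [dp]

lemma dp_zero_right (x : (H × H) →₀ K) : dp α β x 0 = 0 := by
  simp [dp]

lemma dp_add_left (x x' y : (H × H) →₀ K) :
    dp α β (x + x') y = dp α β x y + dp α β x' y := by
  unfold dp
  apply Finsupp.sum_add_index <;> intros <;> simp [add_mul, Finsupp.single_add,
    apply_ite₂ (· + ·), ← Finsupp.sum_add]

lemma dp_add_right (x y y' : (H × H) →₀ K) :
    dp α β x (y + y') = dp α β x y + dp α β x y' := by
  unfold dp
  rw [← Finsupp.sum_add]
  apply Finsupp.sum_congr
  intro pg _
  apply Finsupp.sum_add_index <;> intros <;> simp [mul_add, Finsupp.single_add,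
    apply_ite₂ (· + ·)]

lemma dp_single_single (p g q h : H) (c d : K) :
    dp α β (Finsupp.single (p, g) c) (Finsupp.single (q, h) d) =
      if p = β * g * β⁻¹ * q * α * g⁻¹ * α⁻¹ then
        Finsupp.single (p, g * h) (c * d) else 0 := by
  unfold dp
  rw [Finsupp.sum_single_index, Finsupp.sum_single_index]
  · simp
  · simp

lemma dp_sum_left {ι : Type*} (s : Finset ι) (f : ι → ((H × H) →₀ K)) (y : (H × H) →₀ K) :
    dp α β (∑ i ∈ s, f i) y = ∑ i ∈ s, dp α β (f i) y :=
  map_sum (AddMonoidHom.mk' (fun x => dp α β x y) (fun a b => dp_add_left α β a b y)) f s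

lemma dp_sum_right {ι : Type*} (s : Finset ι) (f : ι → ((H × H) →₀ K)) (x : (H × H) →₀ K) :
    dp α β x (∑ i ∈ s, f i) = ∑ i ∈ s, dp α β x (f i) :=
  map_sum (AddMonoidHom.mk' (fun y => dp α β x y) (fun a b => dp_add_right α β x a b)) f s

end aux

/-- The multiplication `(δ_p ⋈ g)(δ_q ⋈ h) = δ_p δ_{βgβ⁻¹ q αg⁻¹α⁻¹} ⋈ gh` is associative,
and for finite `H` it has unit `(Σ_p δ_p) ⋈ e`. -/
theorem stmt18 (K H : Type) [Field K] [Group H] [DecidableEq H] (α β : H) :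
    (∀ x y z : (H × H) →₀ K, dp α β (dp α β x y) z = dp α β x (dp α β y z)) ∧
    (∀ (inst : Fintype H) (x : (H × H) →₀ K),
      dp α β (∑ p ∈ @Finset.univ H inst, Finsupp.single (p, (1 : H)) (1 : K)) x = x ∧
      dp α β x (∑ p ∈ @Finset.univ H inst, Finsupp.single (p, (1 : H)) (1 : K)) = x) := by
  constructor
  · intro x y z
    induction x using Finsupp.induction with
    | zero => simp [dp_zero_left]
    | single_add pg c x _ _ ih =>
      rw [dp_add_left, dp_add_left, dp_add_left, ih]
      congr 1
      clear ih
      induction y using Finsupp.induction with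
      | zero => simp [dp_zero_left, dp_zero_right]
      | single_add qh d y _ _ ih =>
        rw [dp_add_right, dp_add_left, dp_add_left, dp_add_right, ih]
        congr 1
        clear ih
        induction z using Finsupp.induction with
        | zero => simp [dp_zero_right]
        | single_add rk e z _ _ ih =>
          rw [dp_add_right, dp_add_right, dp_add_right, ih]
          congr 1
          clear ih
          obtain ⟨p, g⟩ := pg; obtain ⟨q, h⟩ := qh; obtain ⟨r, k⟩ := rk
          rw [dp_single_single, dp_single_single]
          by_cases h1 : p = β * g * β⁻¹ * q * α * g⁻¹ * α⁻¹ <;>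
            by_cases h2 : q = β * h * β⁻¹ * r * α * h⁻¹ * α⁻¹
          · rw [if_pos h1, if_pos h2, dp_single_single, dp_single_single, if_pos h1]
            rw [if_pos (by rw [h1, h2]; group), mul_assoc, mul_assoc]
          · rw [if_pos h1, if_neg h2, dp_single_single, dp_zero_right]
            rw [if_neg]
            intro h3
            exact h2 (by
              have : q = (β * g * β⁻¹)⁻¹ * p * (α * g⁻¹ * α⁻¹)⁻¹ := by rw [h1]; group
              rw [this, h3]; group)
          · rw [if_neg h1, if_pos h2, dp_zero_left, dp_single_single, if_neg h1]
          · rw [if_neg h1, if_neg h2, dp_zero_left, dp_zero_right]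
  · intro inst x
    constructor
    · induction x using Finsupp.induction with
      | zero => simp [dp_zero_right]
      | single_add qh d x _ _ ih =>
        rw [dp_add_right, ih]
        congr 1
        obtain ⟨q, h⟩ := qh
        rw [dp_sum_left]
        have : ∀ p : H, dp α β (Finsupp.single (p, (1:H)) (1:K)) (Finsupp.single (q, h) d) =
            if p = q then Finsupp.single (q, h) d else 0 := by
          intro p
          rw [dp_single_single, show (β * 1 * β⁻¹ * q * α * 1⁻¹ * α⁻¹) = q by group]
          split_ifs with hp
          · subst hp; simp
          · rfl
        simp_rw [this]
        simp [Finset.sum_ite_eq']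
    · induction x using Finsupp.induction with
      | zero => simp [dp_zero_left]
      | single_add pg c x _ _ ih =>
        rw [dp_add_left, ih]
        congr 1
        obtain ⟨p, g⟩ := pg
        rw [dp_sum_right]
        have : ∀ q : H, dp α β (Finsupp.single (p, g) c) (Finsupp.single (q, (1:H)) (1:K)) =
            if q = β * g⁻¹ * β⁻¹ * p * α * g * α⁻¹ then Finsupp.single (p, g) c else 0 := by
          intro q
          rw [dp_single_single]
          have hiff : (p = β * g * β⁻¹ * q * α * g⁻¹ * α⁻¹) ↔
              (q = β * g⁻¹ * β⁻¹ * p * α * g * α⁻¹) := by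
            constructor <;> intro hh <;> rw [hh] <;> group
          simp [hiff]
        simp_rw [this]
        simp [Finset.sum_ite_eq']
end
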